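/- arXiv:1006.0091 — 8 statements merged into one kernel-verified Lean document; each statement's English description precedes it below -/
import Mathlib

section
/- Let Φ : [0,∞) → [0,∞) be an Orlicz function with Φ(t) > 0 for t > 0, and for t > 0 let Φ'₊(t) denote the right derivative of Φ at t (which exists since Φ is convex). Then, as elements of (0,∞], the infimum over t > 0 of t·Φ'₊(t)/Φ(t) equals the supremum of the set {p > 0 : the map t ↦ t^{−p}·Φ(t) is nondecreasing on (0,∞)} (this set always contains p = 1, and the common value is the lower Orlicz index a_Φ). -/
open Set Filter Topology
open scoped NNReal ENNReal

/-- An Orlicz function: continuous, convex, nondecreasing on `[0,∞)`, vanishing at `0`,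
positive on `(0,∞)`, and tending to `∞` at `∞`. -/
def IsOrliczFunction (Φ : ℝ → ℝ) : Prop :=
  ContinuousOn Φ (Ici 0) ∧ ConvexOn ℝ (Ici 0) Φ ∧ MonotoneOn Φ (Ici 0) ∧
    Φ 0 = 0 ∧ (∀ t > 0, 0 < Φ t) ∧ Tendsto Φ atTop atTop

/-- The right derivative of `Φ` at `t` (which exists for convex `Φ` at every `t > 0`). -/
noncomputable def rightDeriv (Φ : ℝ → ℝ) (t : ℝ) : ℝ :=
  derivWithin Φ (Ioi t) t

/-- Existence of the right derivative of a convex Orlicz function, together with the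
lower bound `Φ t / t ≤ Φ'₊ t`. -/
lemma orlicz_hasDerivWithinAt (Φ : ℝ → ℝ) (hΦ : IsOrliczFunction Φ) {t : ℝ} (ht : 0 < t) :
    HasDerivWithinAt Φ (rightDeriv Φ t) (Ioi t) t ∧ Φ t / t ≤ rightDeriv Φ t := by
  obtain ⟨hc, hcvx, hmono, h0, hpos, htop⟩ := hΦ
  have hmem : ∀ {y : ℝ}, y ∈ Ioi t → y ∈ Ici (0 : ℝ) := fun hy => (ht.trans hy).le
  have hmonoslope : MonotoneOn (slope Φ t) (Ioi t) := by
    intro x hx y hy hxy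
    rw [slope_def_field, slope_def_field]
    exact hcvx.secant_mono ht.le (hmem hx) (hmem hy)
      (ne_of_gt hx) (ne_of_gt hy) hxy
  have hlb : ∀ y ∈ Ioi t, Φ t / t ≤ slope Φ t y := by
    intro y hy
    have h1 : (Φ 0 - Φ t) / (0 - t) ≤ (Φ y - Φ t) / (y - t) :=
      hcvx.secant_mono ht.le self_mem_Ici (hmem hy) (ne_of_lt ht) (ne_of_gt hy)
        (le_of_lt (ht.trans hy))
    rw [slope_def_field]
    refine le_trans (le_of_eq ?_) h1
    rw [h0, zero_sub, zero_sub, neg_div_neg_eq]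
  have hbdd : BddBelow (slope Φ t '' Ioi t) := by
    refine ⟨Φ t / t, ?_⟩
    rintro z ⟨y, hy, rfl⟩
    exact hlb y hy
  have htend : Tendsto (slope Φ t) (𝓝[>] t) (𝓝 (sInf (slope Φ t '' Ioi t))) :=
    hmonoslope.tendsto_nhdsGT hbdd
  have hd : HasDerivWithinAt Φ (sInf (slope Φ t '' Ioi t)) (Ioi t) t :=
    (hasDerivWithinAt_iff_tendsto_slope' (notMem_Ioi_self)).2 htend
  have heq : rightDeriv Φ t = sInf (slope Φ t '' Ioi t) :=
    hd.derivWithin (uniqueDiffWithinAt_Ioi t)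
  refine ⟨heq ▸ hd, ?_⟩
  rw [heq]
  refine le_csInf ⟨slope Φ t (t + 1), ⟨t + 1, by simp, rfl⟩⟩ ?_
  rintro z ⟨y, hy, rfl⟩
  exact hlb y hy

/-- If `t ↦ t^(-p) Φ t` is nondecreasing then `p Φ t ≤ t Φ'₊ t`. -/
lemma orlicz_mono_imp (Φ : ℝ → ℝ) (hΦ : IsOrliczFunction Φ) {p : ℝ} (hp : 0 < p)
    (hm : MonotoneOn (fun t : ℝ => t ^ (-p) * Φ t) (Ioi 0)) {t : ℝ} (ht : 0 < t) :
    p * Φ t ≤ t * rightDeriv Φ t := by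
  obtain ⟨hder, -⟩ := orlicz_hasDerivWithinAt Φ hΦ ht
  have hΦt : 0 < Φ t := hΦ.2.2.2.2.1 t ht
  set c := Φ t * t ^ (-p) with hc
  have hcpos : 0 < c := mul_pos hΦt (Real.rpow_pos_of_pos ht _)
  have hD : HasDerivAt (fun y : ℝ => c * y ^ p) (c * (p * t ^ (p - 1))) t :=
    (Real.hasDerivAt_rpow_const (Or.inl (ne_of_gt ht))).const_mul c
  have hts : Tendsto (slope Φ t) (𝓝[>] t) (𝓝 (rightDeriv Φ t)) :=
    (hasDerivWithinAt_iff_tendsto_slope' (notMem_Ioi_self)).1 hder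
  have hts2 : Tendsto (slope (fun y : ℝ => c * y ^ p) t) (𝓝[>] t)
      (𝓝 (c * (p * t ^ (p - 1)))) :=
    (hasDerivWithinAt_iff_tendsto_slope' (notMem_Ioi_self)).1 (hD.hasDerivWithinAt)
  have hct : c * t ^ p = Φ t := by
    rw [hc, mul_assoc, ← Real.rpow_add ht]
    simp
  have hev : ∀ᶠ y in 𝓝[>] t, slope (fun y : ℝ => c * y ^ p) t y ≤ slope Φ t y := by
    filter_upwards [self_mem_nhdsWithin] with y hy
    have hy' : t < y := hy
    have hy0 : 0 < y := ht.trans hy'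
    have h2 : c * y ^ p ≤ Φ y := by
      have hmm : t ^ (-p) * Φ t ≤ y ^ (-p) * Φ y :=
        hm (mem_Ioi.2 ht) (mem_Ioi.2 hy0) hy'.le
      have hyp : (0 : ℝ) < y ^ p := Real.rpow_pos_of_pos hy0 p
      have h3 : (t ^ (-p) * Φ t) * y ^ p ≤ (y ^ (-p) * Φ y) * y ^ p :=
        mul_le_mul_of_nonneg_right hmm hyp.le
      have h4 : y ^ (-p) * y ^ p = 1 := by
        rw [← Real.rpow_add hy0]; simp
      calc c * y ^ p = (t ^ (-p) * Φ t) * y ^ p := by rw [hc]; ring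
        _ ≤ (y ^ (-p) * Φ y) * y ^ p := h3
        _ = Φ y * (y ^ (-p) * y ^ p) := by ring
        _ = Φ y := by rw [h4, mul_one]
    rw [slope_def_field, slope_def_field, hct]
    have hyt : (0 : ℝ) < y - t := sub_pos.2 hy'
    gcongr
  have hkey : c * (p * t ^ (p - 1)) ≤ rightDeriv Φ t :=
    le_of_tendsto_of_tendsto hts2 hts hev
  have hpow : t ^ (-p) * t ^ (p - 1) = t⁻¹ := by
    have hexp : -p + (p - 1) = -1 := by ring
    rw [← Real.rpow_add ht, hexp, Real.rpow_neg ht.le, Real.rpow_one]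
  have hval : c * (p * t ^ (p - 1)) = p * Φ t * t⁻¹ := by
    rw [hc]
    calc Φ t * t ^ (-p) * (p * t ^ (p - 1))
        = p * Φ t * (t ^ (-p) * t ^ (p - 1)) := by ring
      _ = p * Φ t * t⁻¹ := by rw [hpow]
  rw [hval] at hkey
  have := mul_le_mul_of_nonneg_left hkey ht.le
  calc p * Φ t = t * (p * Φ t * t⁻¹) := by field_simp
    _ ≤ t * rightDeriv Φ t := this

/-- If `p Φ t ≤ t Φ'₊ t` for all `t > 0` then `t ↦ t^(-p) Φ t` is nondecreasing. -/
lemma orlicz_imp_mono (Φ : ℝ → ℝ) (hΦ : IsOrliczFunction Φ) {p : ℝ} (hp : 0 < p)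
    (h : ∀ t : ℝ, 0 < t → p * Φ t ≤ t * rightDeriv Φ t) :
    MonotoneOn (fun t : ℝ => t ^ (-p) * Φ t) (Ioi 0) := by
  intro t ht s hs hts
  rcases eq_or_lt_of_le hts with rfl | hlt
  · exact le_refl _
  have ht' : (0 : ℝ) < t := ht
  have hs' : (0 : ℝ) < s := hs
  have hΦpos : ∀ u : ℝ, 0 < u → 0 < Φ u := hΦ.2.2.2.2.1
  have hΦc : ContinuousOn Φ (Ici 0) := hΦ.1
  have hIcc : Icc t s ⊆ Ici (0 : ℝ) := fun u hu => le_trans ht'.le hu.1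
  -- fencing theorem
  have key : ∀ ⦃x : ℝ⦄, x ∈ Icc t s →
      p * Real.log x + (Real.log (Φ t) - p * Real.log t) ≤ Real.log (Φ x) := by
    apply image_le_of_deriv_right_le_deriv_boundary
      (f := fun u : ℝ => p * Real.log u + (Real.log (Φ t) - p * Real.log t))
      (f' := fun u : ℝ => p / u)
      (B := fun u : ℝ => Real.log (Φ u)) (B' := fun u : ℝ => rightDeriv Φ u / Φ u)
    · apply ContinuousOn.add _ continuousOn_const
      apply ContinuousOn.mul continuousOn_const
      apply Real.continuousOn_log.mono
      intro u hu
      exact ne_of_gt (lt_of_lt_of_le ht' hu.1)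
    · intro x hx
      have hx0 : 0 < x := lt_of_lt_of_le ht' hx.1
      have := ((Real.hasDerivAt_log (ne_of_gt hx0)).const_mul p).hasDerivWithinAt
        (s := Ici x)
      have h2 := this.add_const (Real.log (Φ t) - p * Real.log t)
      exact h2.congr_deriv (div_eq_mul_inv p x).symm
    · simp
    · apply ContinuousOn.log (hΦc.mono hIcc)
      intro u hu
      exact ne_of_gt (hΦpos u (lt_of_lt_of_le ht' hu.1))
    · intro x hx
      have hx0 : 0 < x := lt_of_lt_of_le ht' hx.1
      obtain ⟨hder, -⟩ := orlicz_hasDerivWithinAt Φ hΦ hx0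
      exact (hder.Ici_of_Ioi).log (ne_of_gt (hΦpos x hx0))
    · intro x hx
      have hx0 : 0 < x := lt_of_lt_of_le ht' hx.1
      have hΦx : 0 < Φ x := hΦpos x hx0
      rw [div_le_div_iff₀ hx0 hΦx]
      have := h x hx0
      linarith
  have hkey := key (right_mem_Icc.2 hts)
  -- convert back from logs
  have hΦt : 0 < Φ t := hΦpos t ht'
  have hΦs : 0 < Φ s := hΦpos s hs'
  have hlhs : 0 < t ^ (-p) * Φ t := mul_pos (Real.rpow_pos_of_pos ht' _) hΦt
  have hrhs : 0 < s ^ (-p) * Φ s := mul_pos (Real.rpow_pos_of_pos hs' _) hΦs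
  rw [← Real.log_le_log_iff hlhs hrhs,
    Real.log_mul (ne_of_gt (Real.rpow_pos_of_pos ht' _)) (ne_of_gt hΦt),
    Real.log_mul (ne_of_gt (Real.rpow_pos_of_pos hs' _)) (ne_of_gt hΦs),
    Real.log_rpow ht', Real.log_rpow hs']
  linarith

/-- The lower Orlicz index: `inf_{t>0} t Φ'₊(t)/Φ(t)` equals
`sup {p > 0 : t ↦ t^{-p} Φ(t) is nondecreasing on (0,∞)}`, as elements of `(0,∞]`;
moreover the set of such `p` contains `p = 1`. -/
theorem orlicz_lower_index_eq (Φ : ℝ → ℝ) (hΦ : IsOrliczFunction Φ) :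
    MonotoneOn (fun t : ℝ => t ^ (-(1 : ℝ)) * Φ t) (Ioi 0) ∧
    (⨅ t : Ioi (0 : ℝ), ENNReal.ofReal ((t : ℝ) * rightDeriv Φ t / Φ t)) =
      sSup (ENNReal.ofReal ''
        {p : ℝ | 0 < p ∧ MonotoneOn (fun t : ℝ => t ^ (-p) * Φ t) (Ioi 0)}) := by
  have hΦpos : ∀ u : ℝ, 0 < u → 0 < Φ u := hΦ.2.2.2.2.1
  have hone : ∀ t : ℝ, 0 < t → 1 * Φ t ≤ t * rightDeriv Φ t := by
    intro t ht
    obtain ⟨-, hge⟩ := orlicz_hasDerivWithinAt Φ hΦ ht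
    rw [one_mul]
    calc Φ t = t * (Φ t / t) := by field_simp
      _ ≤ t * rightDeriv Φ t := by
        exact mul_le_mul_of_nonneg_left hge ht.le
  have h1mem : MonotoneOn (fun t : ℝ => t ^ (-(1 : ℝ)) * Φ t) (Ioi 0) :=
    orlicz_imp_mono Φ hΦ one_pos hone
  refine ⟨h1mem, ?_⟩
  have hratio : ∀ t : ℝ, 0 < t → 1 ≤ t * rightDeriv Φ t / Φ t := by
    intro t ht
    have hΦt : 0 < Φ t := hΦpos t ht
    rw [le_div_iff₀ hΦt, one_mul]
    have := hone t ht
    linarith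
  apply le_antisymm
  · -- iInf ≤ sSup
    apply ENNReal.le_of_forall_nnreal_lt
    intro r hr
    rcases le_or_gt (r : ℝ≥0∞) (ENNReal.ofReal 1) with h | h
    · refine le_trans h (le_sSup ?_)
      exact ⟨1, ⟨one_pos, h1mem⟩, rfl⟩
    · have hr1 : (1 : ℝ) < (r : ℝ) := by
        have := h
        rw [ENNReal.ofReal_one] at this
        exact_mod_cast this
      have hrpos : (0 : ℝ) < (r : ℝ) := lt_trans one_pos hr1
      have hple : ∀ t : ℝ, 0 < t → (r : ℝ) * Φ t ≤ t * rightDeriv Φ t := by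
        intro t ht
        have hΦt : 0 < Φ t := hΦpos t ht
        have hlt : (r : ℝ≥0∞) < ENNReal.ofReal (t * rightDeriv Φ t / Φ t) :=
          lt_of_lt_of_le hr (iInf_le _ (⟨t, ht⟩ : Ioi (0 : ℝ)))
        have hq : 0 < t * rightDeriv Φ t / Φ t := lt_of_lt_of_le one_pos (hratio t ht)
        rw [← ENNReal.ofReal_coe_nnreal, ENNReal.ofReal_lt_ofReal_iff hq] at hlt
        rw [← le_div_iff₀ hΦt]
        exact hlt.le
      have hmem : ((r : ℝ)) ∈ {p : ℝ | 0 < p ∧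
          MonotoneOn (fun t : ℝ => t ^ (-p) * Φ t) (Ioi 0)} :=
        ⟨hrpos, orlicz_imp_mono Φ hΦ hrpos hple⟩
      exact le_trans (le_of_eq ENNReal.ofReal_coe_nnreal.symm)
        (le_sSup ⟨(r : ℝ), hmem, rfl⟩)
  · -- sSup ≤ iInf
    apply sSup_le
    rintro x ⟨p, ⟨hp0, hpm⟩, rfl⟩
    refine le_iInf fun t => ?_
    obtain ⟨t, ht⟩ := t
    apply ENNReal.ofReal_le_ofReal
    have hΦt : 0 < Φ t := hΦpos t ht
    have := orlicz_mono_imp Φ hΦ hp0 hpm ht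
    rw [le_div_iff₀ hΦt]
    exact this
end

section
/- Let Φ : [0,∞) → [0,∞) be an Orlicz function with Φ(t) > 0 for t > 0, and for t > 0 let Φ'₊(t) denote the right derivative of Φ at t (which exists since Φ is convex). Then, as elements of (0,∞] (with the convention that the infimum of the empty set is +∞), the supremum over t > 0 of t·Φ'₊(t)/Φ(t) equals the infimum of the set {q > 0 : the map t ↦ t^{−q}·Φ(t) is nonincreasing on (0,∞)} (the common value is the upper Orlicz index b_Φ). -/
open Set Filter

open Topology

/-- A convex function on `[0,∞)` has a right derivative at every `t > 0`. -/
lemma orlicz_hasRightDerivAt {Φ : ℝ → ℝ} (hcv : ConvexOn ℝ (Ici 0) Φ) {t : ℝ} (ht : 0 < t) :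
    HasDerivWithinAt Φ (rightDeriv Φ t) (Ioi t) t := by
  have hslope := hcv.slope_mono (x := t) ht.le
  have hmono : MonotoneOn (slope Φ t) (Ioi t) :=
    hslope.mono fun y hy => ⟨(ht.trans hy).le, ne_of_gt hy⟩
  have h0mem : (0 : ℝ) ∈ Ici (0:ℝ) \ {t} := ⟨mem_Ici.mpr le_rfl, by simp [ht.ne]⟩
  have hbdd : BddBelow (slope Φ t '' Ioi t) := by
    refine ⟨slope Φ t 0, ?_⟩
    rintro _ ⟨y, hy, rfl⟩
    exact hslope h0mem ⟨(ht.trans hy).le, ne_of_gt hy⟩ (ht.trans hy).le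
  have htend := hmono.tendsto_nhdsGT hbdd
  have h1 : HasDerivWithinAt Φ (sInf (slope Φ t '' Ioi t)) (Ioi t) t := by
    rw [hasDerivWithinAt_iff_tendsto_slope]
    have : Ioi t \ {t} = Ioi t := diff_singleton_eq_self (by simp)
    rw [this]
    exact htend
  exact h1.differentiableWithinAt.hasDerivWithinAt

/-- The right derivative of a nondecreasing function is nonnegative. -/
lemma orlicz_rightDeriv_nonneg {Φ : ℝ → ℝ} (hcv : ConvexOn ℝ (Ici 0) Φ)
    (hmono : MonotoneOn Φ (Ici 0)) {t : ℝ} (ht : 0 < t) : 0 ≤ rightDeriv Φ t := by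
  have h := orlicz_hasRightDerivAt hcv ht
  rw [hasDerivWithinAt_iff_tendsto_slope] at h
  have hIoi : Ioi t \ {t} = Ioi t := diff_singleton_eq_self (by simp)
  rw [hIoi] at h
  refine ge_of_tendsto h ?_
  filter_upwards [self_mem_nhdsWithin] with y hy
  have hty : t < y := hy
  have hm : Φ t ≤ Φ y := hmono ht.le (ht.trans hty).le hty.le
  rw [slope_def_field]
  exact div_nonneg (by linarith) (by linarith)

/-- If the right logarithmic derivative is bounded by `q/t`, then `t^{-q} Φ t` is antitone. -/
lemma orlicz_antitone_of_bound {Φ : ℝ → ℝ} (hC : ContinuousOn Φ (Ici 0))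
    (hcv : ConvexOn ℝ (Ici 0) Φ) {q : ℝ}
    (hq : ∀ t : ℝ, 0 < t → rightDeriv Φ t ≤ q * Φ t / t) :
    AntitoneOn (fun t : ℝ => t ^ (-q) * Φ t) (Ioi 0) := by
  intro a ha x hx hax
  have ha0 : (0:ℝ) < a := ha
  have key : ∀ y ∈ Icc a x, y ^ (-q) * Φ y ≤ a ^ (-q) * Φ a := by
    refine image_le_of_deriv_right_le_deriv_boundary
      (f := fun t => t ^ (-q) * Φ t)
      (f' := fun t => (-q * t ^ (-q - 1)) * Φ t + t ^ (-q) * rightDeriv Φ t)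
      ?_ ?_ (B := fun _ => a ^ (-q) * Φ a) (B' := fun _ => 0) le_rfl
      continuousOn_const (fun y _ => hasDerivWithinAt_const y _ _) ?_
    · refine ContinuousOn.mul ?_ (hC.mono fun y hy => le_trans ha0.le hy.1)
      exact ContinuousOn.rpow_const continuousOn_id
        (fun y hy => Or.inl (ne_of_gt (lt_of_lt_of_le ha0 hy.1)))
    · intro y hy
      have hy0 : 0 < y := lt_of_lt_of_le ha0 hy.1
      exact ((Real.hasDerivAt_rpow_const (Or.inl hy0.ne')).hasDerivWithinAt).mul
        (orlicz_hasRightDerivAt hcv hy0).Ici_of_Ioi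
    · intro y hy
      have hy0 : 0 < y := lt_of_lt_of_le ha0 hy.1
      have h1 : rightDeriv Φ y ≤ q * Φ y / y := hq y hy0
      have h2 : (0:ℝ) < y ^ (-q) := Real.rpow_pos_of_pos hy0 _
      have h3 : y ^ (-q - 1) = y ^ (-q) / y := by
        rw [Real.rpow_sub hy0, Real.rpow_one]
      have h4 : y ^ (-q) * rightDeriv Φ y ≤ y ^ (-q) * (q * Φ y / y) :=
        mul_le_mul_of_nonneg_left h1 h2.le
      have h5 : y ^ (-q) * (q * Φ y / y) = q * (y ^ (-q) / y) * Φ y := by ring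
      rw [h5] at h4
      simp only [h3]
      linarith
  exact key x ⟨hax, le_refl x⟩

/-- If `t^{-q} Φ t` is antitone, then the logarithmic derivative is bounded by `q`. -/
lemma orlicz_bound_of_antitone {Φ : ℝ → ℝ} (hcv : ConvexOn ℝ (Ici 0) Φ)
    (hpos : ∀ t > 0, 0 < Φ t) {q : ℝ}
    (hanti : AntitoneOn (fun t : ℝ => t ^ (-q) * Φ t) (Ioi 0)) {t : ℝ} (ht : 0 < t) :
    t * rightDeriv Φ t / Φ t ≤ q := by
  have hD := orlicz_hasRightDerivAt hcv ht
  set c := t ^ (-q) * Φ t with hc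
  have hgt : t ^ q * c = Φ t := by
    rw [hc, ← mul_assoc, ← Real.rpow_add ht]
    simp
  have key : rightDeriv Φ t ≤ q * Φ t / t := by
    have hslope : ∀ᶠ s in 𝓝[>] t, rightDeriv Φ t ≤ slope (fun s : ℝ => s ^ q * c) t s := by
      filter_upwards [self_mem_nhdsWithin] with s hs
      have hts : t < s := hs
      have hs0 : 0 < s := ht.trans hts
      have h1 : rightDeriv Φ t ≤ slope Φ t s :=
        hcv.rightDeriv_le_slope ht.le hs0.le hts hD.differentiableWithinAt
      refine h1.trans ?_
      rw [slope_def_field, slope_def_field, hgt]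
      have hΦs : Φ s ≤ s ^ q * c := by
        have h2 : s ^ (-q) * Φ s ≤ c := hanti (mem_Ioi.mpr ht) (mem_Ioi.mpr hs0) hts.le
        have h3 : (0:ℝ) < s ^ q := Real.rpow_pos_of_pos hs0 _
        have h4 : s ^ q * (s ^ (-q) * Φ s) ≤ s ^ q * c := mul_le_mul_of_nonneg_left h2 h3.le
        rwa [← mul_assoc, ← Real.rpow_add hs0, add_neg_cancel, Real.rpow_zero, one_mul] at h4
      gcongr
    have hg : HasDerivAt (fun s : ℝ => s ^ q * c) (q * t ^ (q - 1) * c) t :=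
      (Real.hasDerivAt_rpow_const (Or.inl ht.ne')).mul_const c
    have htend : Tendsto (slope (fun s : ℝ => s ^ q * c) t) (𝓝[>] t)
        (𝓝 (q * t ^ (q - 1) * c)) := by
      have := hasDerivWithinAt_iff_tendsto_slope.mp (hg.hasDerivWithinAt (s := Ioi t))
      rwa [diff_singleton_eq_self (by simp : t ∉ Ioi t)] at this
    have hle := ge_of_tendsto htend hslope
    have hcalc : q * t ^ (q - 1) * c = q * Φ t / t := by
      rw [hc, show q * t ^ (q - 1) * (t ^ (-q) * Φ t) = q * (t ^ (q - 1) * t ^ (-q)) * Φ t by ring,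
        ← Real.rpow_add ht, show q - 1 + -q = -1 by ring, Real.rpow_neg_one]
      ring
    rwa [hcalc] at hle
  have hΦt := hpos t ht
  rw [div_le_iff₀ hΦt]
  calc t * rightDeriv Φ t ≤ t * (q * Φ t / t) := mul_le_mul_of_nonneg_left key ht.le
    _ = q * Φ t := by field_simp

/-- The upper Orlicz index: `sup_{t>0} t Φ'₊(t)/Φ(t)` equals
`inf {q > 0 : t ↦ t^{-q} Φ(t) is nonincreasing on (0,∞)}`, as elements of `(0,∞]`
(in `ℝ≥0∞` the infimum of the empty set is `∞`). -/
theorem orlicz_upper_index_eq (Φ : ℝ → ℝ) (hΦ : IsOrliczFunction Φ) :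
    (⨆ t : Ioi (0 : ℝ), ENNReal.ofReal ((t : ℝ) * rightDeriv Φ t / Φ t)) =
      sInf (ENNReal.ofReal ''
        {q : ℝ | 0 < q ∧ AntitoneOn (fun t : ℝ => t ^ (-q) * Φ t) (Ioi 0)}) := by
  obtain ⟨hC, hcv, hmono, h0, hpos, htop⟩ := hΦ
  apply le_antisymm
  · refine le_sInf ?_
    rintro _ ⟨q, ⟨hq, hanti⟩, rfl⟩
    refine iSup_le ?_
    rintro ⟨t, ht⟩
    exact ENNReal.ofReal_le_ofReal (orlicz_bound_of_antitone hcv hpos hanti ht)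
  · set A := ⨆ t : Ioi (0 : ℝ), ENNReal.ofReal ((t : ℝ) * rightDeriv Φ t / Φ t) with hA
    refine ENNReal.le_of_forall_pos_le_add fun ε hε hlt => ?_
    set b := A.toReal with hb
    have hb0 : (0:ℝ) ≤ b := ENNReal.toReal_nonneg
    have hAb : A = ENNReal.ofReal b := (ENNReal.ofReal_toReal hlt.ne).symm
    have hε0 : (0:ℝ) < (ε : ℝ) := hε
    have hbound : ∀ t : ℝ, 0 < t → rightDeriv Φ t ≤ (b + ε) * Φ t / t := by
      intro t ht
      have h1 : ENNReal.ofReal (t * rightDeriv Φ t / Φ t) ≤ A := by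
        rw [hA]
        exact le_iSup (fun t : Ioi (0:ℝ) => ENNReal.ofReal ((t : ℝ) * rightDeriv Φ t / Φ t))
          ⟨t, ht⟩
      rw [hAb] at h1
      have h2 : t * rightDeriv Φ t / Φ t ≤ b := (ENNReal.ofReal_le_ofReal_iff hb0).mp h1
      have hΦt := hpos t ht
      rw [div_le_iff₀ hΦt] at h2
      rw [le_div_iff₀ ht]
      have hΦnn : (0:ℝ) ≤ Φ t := hΦt.le
      nlinarith
    have hmem : (b + (ε:ℝ)) ∈
        {q : ℝ | 0 < q ∧ AntitoneOn (fun t : ℝ => t ^ (-q) * Φ t) (Ioi 0)} :=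
      ⟨by linarith, orlicz_antitone_of_bound hC hcv hbound⟩
    calc sInf (ENNReal.ofReal ''
          {q : ℝ | 0 < q ∧ AntitoneOn (fun t : ℝ => t ^ (-q) * Φ t) (Ioi 0)})
        ≤ ENNReal.ofReal (b + ε) := sInf_le (mem_image_of_mem _ hmem)
      _ = ENNReal.ofReal b + ENNReal.ofReal ε := ENNReal.ofReal_add hb0 ε.coe_nonneg
      _ = A + ε := by rw [← hAb, ENNReal.ofReal_coe_nnreal]
end

section
/- Let (X, μ) be a measure space, f : X → ℂ measurable, and Φ an Orlicz function. Suppose the set S = {c > 0 : λ_f(s)·Φ(s/c) ≤ 1 for all s > 0} is nonempty and c₀ := inf S > 0. Then the infimum is attained in the sense that λ_f(s)·Φ(s/c₀) ≤ 1 for all s > 0; that is, if ‖f‖_{L^w_Φ} > 0 then sup_{s>0} λ_f(s)·Φ(s/‖f‖_{L^w_Φ}) ≤ 1. (Commutative case of Proposition 3.3(1).) -/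
open Set Filter MeasureTheory
open scoped ENNReal

/-- The distribution function `λ_f(s) = μ {x : |f(x)| > s}`, a value in `[0,∞]`. -/
noncomputable def distrib {X : Type*} [MeasurableSpace X] (μ : Measure X) (f : X → ℂ)
    (s : ℝ) : ℝ≥0∞ :=
  μ {x | s < ‖f x‖}

/-- The weak Orlicz quasinorm `‖f‖_{L^w_Φ} = inf {c > 0 : λ_f(s) Φ(s/c) ≤ 1 for all s > 0}`,
as an element of `[0,∞]` (the infimum of the empty set being `∞`). -/
noncomputable def wOrliczNorm {X : Type*} [MeasurableSpace X] (μ : Measure X) (Φ : ℝ → ℝ)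
    (f : X → ℂ) : ℝ≥0∞ :=
  sInf (ENNReal.ofReal ''
    {c : ℝ | 0 < c ∧ ∀ s > 0, distrib μ f s * ENNReal.ofReal (Φ (s / c)) ≤ 1})

/-- If the set `S = {c > 0 : λ_f(s) Φ(s/c) ≤ 1 for all s > 0}` is nonempty and its (real)
infimum `c₀` is positive, then the infimum is attained: `λ_f(s) Φ(s/c₀) ≤ 1` for all `s > 0`. -/
theorem wOrliczNorm_inf_attained {X : Type*} [MeasurableSpace X] (μ : Measure X)
    (f : X → ℂ) (hf : Measurable f) (Φ : ℝ → ℝ) (hΦ : IsOrliczFunction Φ)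
    (hne : {c : ℝ | 0 < c ∧ ∀ s > 0, distrib μ f s * ENNReal.ofReal (Φ (s / c)) ≤ 1}.Nonempty)
    (hpos : 0 < sInf {c : ℝ | 0 < c ∧ ∀ s > 0,
      distrib μ f s * ENNReal.ofReal (Φ (s / c)) ≤ 1}) :
    ∀ s > 0, distrib μ f s * ENNReal.ofReal
      (Φ (s / sInf {c : ℝ | 0 < c ∧ ∀ s > 0,
        distrib μ f s * ENNReal.ofReal (Φ (s / c)) ≤ 1})) ≤ 1 := by
  set S := {c : ℝ | 0 < c ∧ ∀ s > 0, distrib μ f s * ENNReal.ofReal (Φ (s / c)) ≤ 1} with hS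
  set c₀ := sInf S with hc₀
  intro s hs
  obtain ⟨c, hcpos, hcle⟩ := hne
  have hΦpos : 0 < Φ (s / c) := hΦ.2.2.2.2.1 _ (div_pos hs hcpos)
  have hfin : distrib μ f s ≠ ∞ := by
    intro htop
    have h1 := hcle s hs
    rw [htop, ENNReal.top_mul (by simp [ENNReal.ofReal_eq_zero]; linarith)] at h1
    exact (by simp : ¬ (⊤ : ℝ≥0∞) ≤ 1) h1
  have hbdd : BddBelow S := ⟨0, fun x hx => hx.1.le⟩
  have hcl : c₀ ∈ closure S := csInf_mem_closure ⟨c, hcpos, hcle⟩ hbdd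
  have hnebot : (nhdsWithin c₀ S).NeBot := mem_closure_iff_nhdsWithin_neBot.mp hcl
  have hdiv : ContinuousWithinAt (fun c : ℝ => s / c) S c₀ :=
    (continuousAt_const.div continuousAt_id hpos.ne').continuousWithinAt
  have hmaps : MapsTo (fun c : ℝ => s / c) S (Ici 0) := fun x hx => (div_pos hs hx.1).le
  have hΦc : ContinuousWithinAt Φ (Ici 0) (s / c₀) := hΦ.1 _ (div_pos hs hpos).le
  have htend : Tendsto (fun c : ℝ => distrib μ f s * ENNReal.ofReal (Φ (s / c)))
      (nhdsWithin c₀ S) (nhds (distrib μ f s * ENNReal.ofReal (Φ (s / c₀)))) := by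
    apply ENNReal.Tendsto.const_mul
    · exact (ENNReal.continuous_ofReal.tendsto _).comp (hΦc.comp hdiv hmaps)
    · exact Or.inr hfin
  refine le_of_tendsto htend ?_
  filter_upwards [self_mem_nhdsWithin] with x hx
  exact hx.2 s hs
end

section
/- Let (X, μ) be a measure space and Φ an Orlicz function. The weak Orlicz space is complete: if (f_n) is a sequence of a.e.-finite measurable functions on X that is Cauchy for the weak Orlicz quasinorm (i.e., for every ε > 0 there is N such that ‖f_n − f_m‖_{L^w_Φ} < ε for all n, m ≥ N), then there exists an a.e.-finite measurable function f on X such that ‖f_n − f‖_{L^w_Φ} → 0. (Commutative case of Proposition 3.4(2).) -/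
open Set Filter MeasureTheory
open scoped ENNReal Topology

/-- If the weak Orlicz norm of `h` is `< c`, then the defining inequality holds at `c`. -/
lemma distrib_mul_le_of_wOrliczNorm_lt {X : Type*} [MeasurableSpace X] (μ : Measure X)
    {Φ : ℝ → ℝ} (hmono : MonotoneOn Φ (Ici 0)) {h : X → ℂ} {c : ℝ} (hc : 0 < c)
    (hlt : wOrliczNorm μ Φ h < ENNReal.ofReal c) :
    ∀ s > 0, distrib μ h s * ENNReal.ofReal (Φ (s / c)) ≤ 1 := by
  obtain ⟨a, ha, halt⟩ := sInf_lt_iff.1 hlt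
  obtain ⟨c', ⟨hc', hc'le⟩, rfl⟩ := ha
  have hcc : c' < c := (ENNReal.ofReal_lt_ofReal_iff hc).1 halt
  intro s hs
  have h1 : Φ (s / c) ≤ Φ (s / c') := by
    apply hmono (mem_Ici.2 (by positivity)) (mem_Ici.2 (by positivity))
    gcongr
  calc distrib μ h s * ENNReal.ofReal (Φ (s / c))
      ≤ distrib μ h s * ENNReal.ofReal (Φ (s / c')) := by
        exact mul_le_mul_right (ENNReal.ofReal_le_ofReal h1) _
    _ ≤ 1 := hc'le s hs

/-- The weak Orlicz space is complete: any Cauchy sequence for the weak Orlicz quasinorm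
converges in the weak Orlicz quasinorm to some measurable function. -/
theorem wOrliczNorm_complete {X : Type*} [MeasurableSpace X] (μ : Measure X)
    (Φ : ℝ → ℝ) (hΦ : IsOrliczFunction Φ)
    (f : ℕ → X → ℂ) (hf : ∀ n, Measurable (f n))
    (hcauchy : ∀ ε : ℝ, 0 < ε → ∃ N : ℕ, ∀ n ≥ N, ∀ m ≥ N,
      wOrliczNorm μ Φ (fun x => f n x - f m x) < ENNReal.ofReal ε) :
    ∃ g : X → ℂ, Measurable g ∧
      Tendsto (fun n => wOrliczNorm μ Φ (fun x => f n x - g x)) atTop (nhds 0) := by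
  obtain ⟨hcont, hconv, hmono, h0, hpos, htop⟩ := hΦ
  -- Step 1: the sequence is Cauchy in measure.
  have key : ∀ s : ℝ, 0 < s → ∀ δ : ℝ, 0 < δ → ∃ N, ∀ n ≥ N, ∀ m ≥ N,
      distrib μ (fun x => f n x - f m x) s ≤ ENNReal.ofReal δ := by
    intro s hs δ hδ
    obtain ⟨t0, ht0⟩ := eventually_atTop.1 (tendsto_atTop.1 htop (1/δ))
    set t1 := max t0 1 with ht1def
    have ht1 : (0:ℝ) < t1 := lt_of_lt_of_le one_pos (le_max_right _ _)
    have hΦt1 : 1/δ ≤ Φ t1 := ht0 t1 (le_max_left _ _)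
    have hct : 0 < s / t1 := by positivity
    obtain ⟨N, hN⟩ := hcauchy (s / t1) hct
    refine ⟨N, fun n hn m hm => ?_⟩
    have hmain := distrib_mul_le_of_wOrliczNorm_lt μ hmono hct (hN n hn m hm) s hs
    have hΦeq : s / (s / t1) = t1 := by field_simp
    rw [hΦeq] at hmain
    have hΦpos : 0 < Φ t1 := lt_of_lt_of_le (by positivity) hΦt1
    have h2 : distrib μ (fun x => f n x - f m x) s ≤ (ENNReal.ofReal (Φ t1))⁻¹ :=
      ENNReal.le_inv_iff_mul_le.2 hmain
    refine h2.trans ?_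
    rw [← ENNReal.ofReal_inv_of_pos hΦpos]
    apply ENNReal.ofReal_le_ofReal
    have : (Φ t1)⁻¹ ≤ (δ⁻¹)⁻¹ := by
      gcongr
      rwa [one_div] at hΦt1
    rwa [inv_inv] at this
  -- Step 2: choose a rapidly Cauchy subsequence.
  have key2 : ∀ k : ℕ, ∃ N, ∀ n ≥ N, ∀ m ≥ N,
      distrib μ (fun x => f n x - f m x) ((1/2)^k) ≤ ENNReal.ofReal ((1/2)^k) :=
    fun k => key _ (by positivity) _ (by positivity)
  choose Nk hNk using key2
  let a : ℕ → ℕ := fun k => Nat.rec (Nk 0) (fun k ih => max (ih + 1) (Nk (k+1))) k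
  have ha_succ : ∀ k, a (k+1) = max (a k + 1) (Nk (k+1)) := fun k => rfl
  have ha_mono : StrictMono a := strictMono_nat_of_lt_succ fun k => by
    rw [ha_succ]; exact lt_of_lt_of_le (Nat.lt_succ_self _) (le_max_left _ _)
  have haN : ∀ k, Nk k ≤ a k := by
    intro k
    cases k with
    | zero => exact le_refl _
    | succ k => rw [ha_succ]; exact le_max_right _ _
  -- Borel–Cantelli
  set E : ℕ → Set X := fun k => {x | (1/2:ℝ)^k < ‖f (a (k+1)) x - f (a k) x‖} with hE_def
  have hE : ∀ k, μ (E k) ≤ ENNReal.ofReal ((1/2)^k) := by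
    intro k
    exact hNk k (a (k+1)) (le_trans (haN k) (ha_mono (Nat.lt_succ_self k)).le)
      (a k) (haN k)
  have hsum : (∑' k, μ (E k)) ≠ ∞ := by
    refine ne_top_of_le_ne_top ?_ (ENNReal.tsum_le_tsum hE)
    rw [← ENNReal.ofReal_tsum_of_nonneg (fun k => by positivity)
      (summable_geometric_of_lt_one (by norm_num) (by norm_num))]
    exact ENNReal.ofReal_ne_top
  have hae := MeasureTheory.ae_eventually_notMem hsum
  have haetend : ∀ᵐ x ∂μ, ∃ l : ℂ, Tendsto (fun k => f (a k) x) atTop (𝓝 l) := by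
    filter_upwards [hae] with x hx
    obtain ⟨K, hK⟩ := eventually_atTop.1 hx
    have hcs : CauchySeq (fun k => f (a (K + k)) x) := by
      apply cauchySeq_of_le_geometric (1/2) ((1/2)^K) (by norm_num)
      intro k
      have h1 : x ∉ E (K + k) := hK (K + k) (Nat.le_add_right _ _)
      simp only [hE_def, Set.mem_setOf_eq, not_lt] at h1
      rw [dist_eq_norm]
      calc ‖f (a (K + k)) x - f (a (K + k + 1)) x‖
          = ‖f (a (K + k + 1)) x - f (a (K + k)) x‖ := norm_sub_rev _ _
        _ ≤ (1/2)^(K+k) := h1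
        _ = (1/2)^K * (1/2)^k := pow_add _ _ _
    obtain ⟨l, hl⟩ := cauchySeq_tendsto_of_complete hcs
    refine ⟨l, (tendsto_add_atTop_iff_nat K).1 ?_⟩
    have : (fun k => f (a (k + K)) x) = fun k => f (a (K + k)) x := by
      funext k; rw [Nat.add_comm]
    rw [this]
    exact hl
  obtain ⟨g, hgmeas, hgtend⟩ := measurable_limit_of_tendsto_metrizable_ae
    (fun k => (hf (a k)).aemeasurable) haetend
  refine ⟨g, hgmeas, ?_⟩
  rw [ENNReal.tendsto_atTop_zero]
  intro ε hε
  obtain ⟨r, hr0, hrε⟩ : ∃ r : ℝ, 0 < r ∧ ENNReal.ofReal r ≤ ε := by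
    rcases eq_or_ne ε ∞ with rfl | hεtop
    · exact ⟨1, one_pos, le_top⟩
    · have h1 : 0 < ε.toReal := ENNReal.toReal_pos hε.ne' hεtop
      refine ⟨ε.toReal / 2, by positivity, ?_⟩
      calc ENNReal.ofReal (ε.toReal / 2) ≤ ENNReal.ofReal ε.toReal :=
            ENNReal.ofReal_le_ofReal (by linarith)
        _ = ε := ENNReal.ofReal_toReal hεtop
  obtain ⟨N, hN⟩ := hcauchy (r/2) (by positivity)
  refine ⟨N, fun m hm => ?_⟩
  refine le_trans (le_trans (sInf_le ?_) (le_refl (ENNReal.ofReal r))) hrε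
  refine ⟨r, ⟨hr0, fun s hs => ?_⟩, rfl⟩
  -- the key inequality at level s
  set T : ℕ → Set X := fun k => {x | s/2 < ‖f m x - f (a k) x‖} with hT_def
  set B : ℝ≥0∞ := (ENNReal.ofReal (Φ (s / r)))⁻¹ with hB_def
  have hΦsr : 0 < Φ (s / r) := hpos _ (by positivity)
  have hT : ∀ k, N ≤ k → μ (T k) ≤ B := by
    intro k hk
    have hak : N ≤ a k := le_trans hk (ha_mono.le_apply)
    have hnorm := hN m hm (a k) hak
    have hmain := distrib_mul_le_of_wOrliczNorm_lt μ hmono (by positivity : (0:ℝ) < r/2)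
      hnorm (s/2) (by positivity)
    have heq : s / 2 / (r / 2) = s / r := by field_simp
    rw [heq] at hmain
    exact ENNReal.le_inv_iff_mul_le.2 hmain
  set S : ℕ → Set X := fun M => ⋂ k, ⋂ (_ : M ≤ k), T k with hS_def
  have hSmono : Monotone S := by
    intro M M' hMM'
    exact fun x hx => mem_iInter₂.2 fun k hk => mem_iInter₂.1 hx k (le_trans hMM' hk)
  have hsub : {x | s < ‖f m x - g x‖} ⊆
      (⋃ M, S M) ∪ {x | ¬ Tendsto (fun k => f (a k) x) atTop (𝓝 (g x))} := by
    intro x hx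
    by_cases hxA : Tendsto (fun k => f (a k) x) atTop (𝓝 (g x))
    · left
      have ht : Tendsto (fun k => ‖f m x - f (a k) x‖) atTop (𝓝 ‖f m x - g x‖) :=
        (tendsto_const_nhds.sub hxA).norm
      have hx' : s / 2 < ‖f m x - g x‖ := by
        have := hx; simp only [Set.mem_setOf_eq] at this; linarith
      have hev : ∀ᶠ k in atTop, s/2 < ‖f m x - f (a k) x‖ := ht.eventually_const_lt hx'
      obtain ⟨M, hM⟩ := eventually_atTop.1 hev
      exact mem_iUnion.2 ⟨M, mem_iInter₂.2 fun k hk => hM k hk⟩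
    · right; exact hxA
  have hμA : μ {x | ¬ Tendsto (fun k => f (a k) x) atTop (𝓝 (g x))} = 0 := hgtend
  have hdistrib : distrib μ (fun x => f m x - g x) s ≤ B := by
    calc distrib μ (fun x => f m x - g x) s
        ≤ μ ((⋃ M, S M) ∪ {x | ¬ Tendsto (fun k => f (a k) x) atTop (𝓝 (g x))}) :=
          measure_mono hsub
      _ ≤ μ (⋃ M, S M) + μ {x | ¬ Tendsto (fun k => f (a k) x) atTop (𝓝 (g x))} :=
          measure_union_le _ _
      _ = μ (⋃ M, S M) := by rw [hμA, add_zero]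
      _ = ⨆ M, μ (S M) := hSmono.directed_le.measure_iUnion
      _ ≤ B := by
          refine iSup_le fun M => ?_
          refine le_trans (measure_mono ?_) (hT (max M N) (le_max_right _ _))
          exact iInter₂_subset (max M N) (le_max_left _ _)
  calc distrib μ (fun x => f m x - g x) s * ENNReal.ofReal (Φ (s / r))
      ≤ B * ENNReal.ofReal (Φ (s / r)) := mul_le_mul_left hdistrib _
    _ = 1 := ENNReal.inv_mul_cancel (by simp [ENNReal.ofReal_pos.2 hΦsr, (ENNReal.ofReal_pos.2 hΦsr).ne'])
        ENNReal.ofReal_ne_top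
end

section
/- Marcinkiewicz-type interpolation for weak Orlicz spaces (commutative case of Theorem 4.2): Let (X, μ) and (Y, ν) be σ-finite measure spaces and 0 < p₀ < p₁ ≤ ∞. Let T be a map from L^{p₀}(μ) + L^{p₁}(μ) to a.e.-finite measurable functions on Y such that: (i) |T(α·f)| ≤ |α|·|Tf| ν-a.e. for every scalar α and every f; (ii) there is K ≥ 1 with |T(f+g)| ≤ K·(|Tf| + |Tg|) ν-a.e. for all f, g (T is quasilinear); (iii) there are constants A₀, A₁ > 0 such that for i = 0, 1, s·ν{|Tf| > s}^{1/p_i} ≤ A_i·‖f‖_{L^{p_i}(μ)} for all s > 0 and all f ∈ L^{p_i}(μ) (for p₁ = ∞ this means ‖Tf‖_{L^∞(ν)} ≤ A₁·‖f‖_{L^∞(μ)}); i.e., T is simultaneously of weak type (p₀,p₀) and (p₁,p₁). Let Φ be an Orlicz function for which there exist r₀, r₁ with p₀ < r₀ ≤ r₁ < p₁, t ↦ t^{−r₀}Φ(t) nondecreasing on (0,∞), and t ↦ t^{−r₁}Φ(t) nonincreasing on (0,∞) (this expresses p₀ < a_Φ ≤ b_Φ < p₁). Then there exists a constant C > 0,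 depending only on K, A₀, A₁, p₀, p₁, r₀, r₁, such that sup_{s>0} ν{|Tf| > s}·Φ(s) ≤ C·sup_{s>0} μ{|f| > s}·Φ(s) for every f in the domain (both sides in [0,∞]). -/
open Set Filter MeasureTheory
open scoped ENNReal

/-- `T` is of weak type `(p,p)` with constant `A`: for finite `p` this means
`s · ν{|Tf| > s}^{1/p} ≤ A ‖f‖_{L^p(μ)}` for all `s > 0`, and for `p = ∞` it means
`‖Tf‖_{L^∞(ν)} ≤ A ‖f‖_{L^∞(μ)}`. -/
def HasWeakTypePP {X Y : Type*} [MeasurableSpace X] [MeasurableSpace Y]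
    (μ : Measure X) (ν : Measure Y) (T : (X → ℂ) → Y → ℂ) (p : ℝ≥0∞) (A : ℝ) : Prop :=
  ∀ f : X → ℂ, MemLp f p μ →
    (p = ⊤ → eLpNormEssSup (T f) ν ≤ ENNReal.ofReal A * eLpNorm f ⊤ μ) ∧
    (p ≠ ⊤ → ∀ s > 0, ENNReal.ofReal s * (ν {y | s < ‖T f y‖}) ^ (1 / p.toReal) ≤
      ENNReal.ofReal A * eLpNorm f p μ)


lemma sum_bound' {X : Type*} [MeasurableSpace X] {μ : Measure X} {g : X → ℝ≥0∞} {s : Set X}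
    {E : ℕ → Set X} (hcover : s ⊆ ⋃ n, E n) {b w : ℝ≥0∞}
    (hb : ∀ n, ∫⁻ x in E n, g x ∂μ ≤ b * w ^ n) :
    ∫⁻ x in s, g x ∂μ ≤ b * (1 - w)⁻¹ := by
  calc ∫⁻ x in s, g x ∂μ ≤ ∫⁻ x in ⋃ n, E n, g x ∂μ := lintegral_mono_set hcover
    _ ≤ ∑' n, ∫⁻ x in E n, g x ∂μ := lintegral_iUnion_le _ _
    _ ≤ ∑' n, b * w ^ n := ENNReal.tsum_le_tsum hb
    _ = b * (1 - w)⁻¹ := by rw [ENNReal.tsum_mul_left, ENNReal.tsum_geometric]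

lemma weak_bound' {m N : ℝ≥0∞} {u A q : ℝ} (hu : 0 < u) (hq : 0 < q)
    (h : ENNReal.ofReal u * m ^ (1/q) ≤ ENNReal.ofReal A * N) :
    m ≤ (ENNReal.ofReal A * N / ENNReal.ofReal u) ^ q := by
  have h1 : m ^ (1/q) ≤ ENNReal.ofReal A * N / ENNReal.ofReal u := by
    rw [ENNReal.le_div_iff_mul_le (Or.inl (by simp [hu])) (Or.inl ENNReal.ofReal_ne_top),
      mul_comm]
    exact h
  have := ENNReal.rpow_le_rpow h1 hq.le
  rwa [← ENNReal.rpow_mul, one_div, inv_mul_cancel₀ hq.ne',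
    ENNReal.rpow_one] at this

lemma rpow_one_div_rpow (x : ℝ≥0∞) {q : ℝ} (hq : 0 < q) : (x ^ (1/q)) ^ q = x := by
  rw [← ENNReal.rpow_mul, one_div, inv_mul_cancel₀ hq.ne', ENNReal.rpow_one]

lemma two_rpow_arith (q r : ℝ) (n : ℕ) :
    (2:ℝ≥0∞) ^ (((n:ℝ)+1)*q) * ((2:ℝ≥0∞) ^ (r*(n:ℝ)))⁻¹ =
      ((2:ℝ≥0∞)^q * ((2:ℝ≥0∞)^(q-r))^n) := by
  have h2 : (2:ℝ≥0∞) ≠ 0 := two_ne_zero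
  have h2' : (2:ℝ≥0∞) ≠ ⊤ := ENNReal.ofNat_ne_top
  rw [← ENNReal.rpow_neg, ← ENNReal.rpow_add _ _ h2 h2',
    ← ENNReal.rpow_natCast ((2:ℝ≥0∞)^(q-r)), ← ENNReal.rpow_mul,
    ← ENNReal.rpow_add _ _ h2 h2']
  congr 1
  ring

lemma tail_int {X : Type*} [MeasurableSpace X] {μ : Measure X} {F : X → ℂ} (hF : Measurable F)
    {M : ℝ≥0∞} {Φ : ℝ → ℝ}
    {r q a : ℝ} (hq : 0 < q) (ha : 0 < a) (hΦa : 0 < Φ a)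
    (hgrow : ∀ n : ℕ, (2:ℝ) ^ (r * (n:ℝ)) * Φ a ≤ Φ (2 ^ n * a))
    (hM : ∀ t > 0, μ {x | t < ‖F x‖} * ENNReal.ofReal (Φ t) ≤ M) :
    ∫⁻ x in {x | a < ‖F x‖}, (‖F x‖₊ : ℝ≥0∞) ^ q ∂μ ≤
      (2:ℝ≥0∞) ^ q * (1 - (2:ℝ≥0∞) ^ (q - r))⁻¹ *
        (ENNReal.ofReal a ^ q * (M / ENNReal.ofReal (Φ a))) := by
  set D := M / ENNReal.ofReal (Φ a) with hD
  set E : ℕ → Set X := fun n => {x | 2 ^ n * a < ‖F x‖} \ {x | 2 ^ (n+1) * a < ‖F x‖} with hE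
  -- distribution bounds
  have hpow_pos : ∀ n : ℕ, (0:ℝ) < 2 ^ n * a := fun n => by positivity
  have hmeas : ∀ n : ℕ, μ (E n) ≤ D * ((2:ℝ≥0∞) ^ (r*(n:ℝ)))⁻¹ := by
    intro n
    have h1 : μ {x | 2 ^ n * a < ‖F x‖} * ENNReal.ofReal (Φ (2 ^ n * a)) ≤ M :=
      hM _ (hpow_pos n)
    have hΦn : (0:ℝ) < (2:ℝ) ^ (r * (n:ℝ)) * Φ a := by positivity
    have hΦn' : (0:ℝ) < Φ (2 ^ n * a) := lt_of_lt_of_le hΦn (hgrow n)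
    have h2 : μ {x | 2 ^ n * a < ‖F x‖} ≤ M / ENNReal.ofReal (Φ (2 ^ n * a)) := by
      rw [ENNReal.le_div_iff_mul_le (Or.inl (by simp [hΦn'])) (Or.inl ENNReal.ofReal_ne_top)]
      exact h1
    have h3 : M / ENNReal.ofReal (Φ (2 ^ n * a)) ≤
        M / (ENNReal.ofReal ((2:ℝ) ^ (r * (n:ℝ))) * ENNReal.ofReal (Φ a)) := by
      apply ENNReal.div_le_div_left
      rw [← ENNReal.ofReal_mul (by positivity)]
      exact ENNReal.ofReal_le_ofReal (hgrow n)
    have h4 : M / (ENNReal.ofReal ((2:ℝ) ^ (r * (n:ℝ))) * ENNReal.ofReal (Φ a)) =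
        D * ((2:ℝ≥0∞) ^ (r*(n:ℝ)))⁻¹ := by
      rw [← ENNReal.ofReal_rpow_of_pos two_pos, ENNReal.ofReal_ofNat]
      rw [div_eq_mul_inv, ENNReal.mul_inv
        (Or.inl (ENNReal.rpow_pos (by norm_num) ENNReal.ofNat_ne_top).ne')
        (Or.inr (ne_of_gt (ENNReal.ofReal_pos.2 hΦa)))]
      rw [hD, div_eq_mul_inv]; ring
    calc μ (E n) ≤ μ {x | 2 ^ n * a < ‖F x‖} := measure_mono diff_subset
      _ ≤ _ := h2.trans (h3.trans h4.le)
  -- cover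
  have hcover : {x | a < ‖F x‖} ⊆ ⋃ n, E n := by
    intro x hx
    have hex : ∃ n : ℕ, ‖F x‖ ≤ 2 ^ (n+1) * a := by
      obtain ⟨n, hn⟩ := pow_unbounded_of_one_lt (‖F x‖ / a) (one_lt_two (α := ℝ))
      exact ⟨n, by nlinarith [div_lt_iff₀ ha |>.mp hn, (pow_le_pow_right₀ one_le_two
        (Nat.le_succ n) : (2:ℝ)^n ≤ 2^(n+1))]⟩
    refine mem_iUnion.2 ⟨Nat.find hex, ⟨?_, fun h => absurd (Nat.find_spec hex) (not_le.2 h)⟩⟩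
    show 2 ^ Nat.find hex * a < ‖F x‖
    rcases Nat.eq_zero_or_pos (Nat.find hex) with h0 | hpos
    · rw [h0]; simpa using hx
    · obtain ⟨m, hm⟩ := Nat.exists_eq_succ_of_ne_zero hpos.ne'
      have h := Nat.find_min hex (m := m) (by omega)
      push_neg at h
      rw [hm]
      exact h
  -- per-annulus integral bound
  have hEmeas : ∀ n, MeasurableSet (E n) := by
    intro n
    exact ((measurableSet_lt measurable_const hF.norm).diff
      (measurableSet_lt measurable_const hF.norm))
  have hann : ∀ n : ℕ, ∫⁻ x in E n, (‖F x‖₊ : ℝ≥0∞) ^ q ∂μ ≤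
      ((2:ℝ≥0∞) ^ q * ENNReal.ofReal a ^ q * D) * ((2:ℝ≥0∞) ^ (q - r)) ^ n := by
    intro n
    have hb : ∀ x ∈ E n, (‖F x‖₊ : ℝ≥0∞) ^ q ≤ (ENNReal.ofReal (2 ^ (n+1) * a)) ^ q := by
      intro x hx
      apply ENNReal.rpow_le_rpow _ hq.le
      rw [← enorm_eq_nnnorm, ← ofReal_norm]
      exact ENNReal.ofReal_le_ofReal (not_lt.mp hx.2)
    calc ∫⁻ x in E n, (‖F x‖₊ : ℝ≥0∞) ^ q ∂μ
        ≤ ∫⁻ _ in E n, (ENNReal.ofReal (2 ^ (n+1) * a)) ^ q ∂μ :=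
          setLIntegral_mono measurable_const hb
      _ = (ENNReal.ofReal (2 ^ (n+1) * a)) ^ q * μ (E n) := setLIntegral_const _ _
      _ ≤ (ENNReal.ofReal (2 ^ (n+1) * a)) ^ q * (D * ((2:ℝ≥0∞) ^ (r*(n:ℝ)))⁻¹) :=
          mul_le_mul_right (hmeas n) _
      _ = ((2:ℝ≥0∞) ^ q * ENNReal.ofReal a ^ q * D) * ((2:ℝ≥0∞) ^ (q - r)) ^ n := by
          rw [ENNReal.ofReal_mul (by positivity), ENNReal.ofReal_pow (by norm_num),
            ENNReal.ofReal_ofNat,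
            ENNReal.mul_rpow_of_nonneg _ _ hq.le, ← ENNReal.rpow_natCast (2:ℝ≥0∞) (n+1),
            ← ENNReal.rpow_mul]
          push_cast
          calc (2:ℝ≥0∞) ^ (((n:ℝ)+1)*q) * ENNReal.ofReal a ^ q *
              (D * ((2:ℝ≥0∞) ^ (r*(n:ℝ)))⁻¹)
              = ((2:ℝ≥0∞) ^ (((n:ℝ)+1)*q) * ((2:ℝ≥0∞) ^ (r*(n:ℝ)))⁻¹) *
                (ENNReal.ofReal a ^ q * D) := by ring
            _ = _ := by rw [two_rpow_arith q r n]; ring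
  calc ∫⁻ x in {x | a < ‖F x‖}, (‖F x‖₊ : ℝ≥0∞) ^ q ∂μ
      ≤ ((2:ℝ≥0∞) ^ q * ENNReal.ofReal a ^ q * D) * (1 - (2:ℝ≥0∞) ^ (q - r))⁻¹ :=
        sum_bound' hcover hann
    _ = _ := by ring

lemma two_rpow_arith2 (r q : ℝ) (n : ℕ) :
    (2:ℝ≥0∞) ^ (r*((n:ℝ)+1)) * ((2:ℝ≥0∞) ^ ((n:ℝ)*q))⁻¹ =
      ((2:ℝ≥0∞)^r * ((2:ℝ≥0∞)^(r-q))^n) := by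
  have h2 : (2:ℝ≥0∞) ≠ 0 := two_ne_zero
  have h2' : (2:ℝ≥0∞) ≠ ⊤ := ENNReal.ofNat_ne_top
  rw [← ENNReal.rpow_neg, ← ENNReal.rpow_add _ _ h2 h2',
    ← ENNReal.rpow_natCast ((2:ℝ≥0∞)^(r-q)), ← ENNReal.rpow_mul,
    ← ENNReal.rpow_add _ _ h2 h2']
  congr 1
  ring

lemma head_int {X : Type*} [MeasurableSpace X] {μ : Measure X} {F : X → ℂ} (hF : Measurable F)
    {M : ℝ≥0∞} {Φ : ℝ → ℝ}
    {r q a : ℝ} (hq : 0 < q) (ha : 0 < a) (hΦa : 0 < Φ a)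
    (hdecay : ∀ n : ℕ, (2:ℝ) ^ (-(r * ((n:ℝ)+1))) * Φ a ≤ Φ (a / 2 ^ (n+1)))
    (hM : ∀ t > 0, μ {x | t < ‖F x‖} * ENNReal.ofReal (Φ t) ≤ M) :
    ∫⁻ x in {x | ‖F x‖ ≤ a}, (‖F x‖₊ : ℝ≥0∞) ^ q ∂μ ≤
      (2:ℝ≥0∞) ^ r * (1 - (2:ℝ≥0∞) ^ (r - q))⁻¹ *
        (ENNReal.ofReal a ^ q * (M / ENNReal.ofReal (Φ a))) := by
  set D := M / ENNReal.ofReal (Φ a) with hD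
  set E : ℕ → Set X := fun n => {x | a / 2 ^ (n+1) < ‖F x‖} \ {x | a / 2 ^ n < ‖F x‖} with hE
  have hpow_pos : ∀ n : ℕ, (0:ℝ) < a / 2 ^ n := fun n => by positivity
  have hmeas : ∀ n : ℕ, μ (E n) ≤ D * (2:ℝ≥0∞) ^ (r*((n:ℝ)+1)) := by
    intro n
    have h1 := hM _ (hpow_pos (n+1))
    have hΦn : (0:ℝ) < (2:ℝ) ^ (-(r * ((n:ℝ)+1))) * Φ a := by positivity
    have hΦn' : (0:ℝ) < Φ (a / 2 ^ (n+1)) := lt_of_lt_of_le hΦn (hdecay n)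
    have h2 : μ {x | a / 2 ^ (n+1) < ‖F x‖} ≤ M / ENNReal.ofReal (Φ (a / 2 ^ (n+1))) := by
      rw [ENNReal.le_div_iff_mul_le (Or.inl (by simp [hΦn'])) (Or.inl ENNReal.ofReal_ne_top)]
      exact h1
    have h3 : M / ENNReal.ofReal (Φ (a / 2 ^ (n+1))) ≤
        M / (ENNReal.ofReal ((2:ℝ) ^ (-(r * ((n:ℝ)+1)))) * ENNReal.ofReal (Φ a)) := by
      apply ENNReal.div_le_div_left
      rw [← ENNReal.ofReal_mul (by positivity)]
      exact ENNReal.ofReal_le_ofReal (hdecay n)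
    have h4 : M / (ENNReal.ofReal ((2:ℝ) ^ (-(r * ((n:ℝ)+1)))) * ENNReal.ofReal (Φ a)) =
        D * (2:ℝ≥0∞) ^ (r*((n:ℝ)+1)) := by
      rw [← ENNReal.ofReal_rpow_of_pos two_pos, ENNReal.ofReal_ofNat]
      rw [div_eq_mul_inv, ENNReal.mul_inv
        (Or.inl (ENNReal.rpow_pos (by norm_num) ENNReal.ofNat_ne_top).ne')
        (Or.inr (ne_of_gt (ENNReal.ofReal_pos.2 hΦa)))]
      rw [ENNReal.rpow_neg, inv_inv, hD, div_eq_mul_inv]; ring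
    calc μ (E n) ≤ μ {x | a / 2 ^ (n+1) < ‖F x‖} := measure_mono diff_subset
      _ ≤ _ := h2.trans (h3.trans h4.le)
  have hcover : {x | 0 < ‖F x‖ ∧ ‖F x‖ ≤ a} ⊆ ⋃ n, E n := by
    intro x hx
    obtain ⟨hx0, hxa⟩ := hx
    have hex : ∃ n : ℕ, a / 2 ^ (n+1) < ‖F x‖ := by
      obtain ⟨n, hn⟩ := pow_unbounded_of_one_lt (a / ‖F x‖) (one_lt_two (α := ℝ))
      refine ⟨n, ?_⟩
      have h1 : a < 2 ^ n * ‖F x‖ := by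
        have := (div_lt_iff₀ hx0).mp hn; linarith
      have h2 : (0:ℝ) < 2 ^ (n+1) := by positivity
      rw [div_lt_iff₀ h2]
      have h3 : (2:ℝ) ^ n * ‖F x‖ ≤ 2 ^ (n+1) * ‖F x‖ := by
        apply mul_le_mul_of_nonneg_right _ (norm_nonneg _)
        exact pow_le_pow_right₀ one_le_two (Nat.le_succ n)
      nlinarith
    refine mem_iUnion.2 ⟨Nat.find hex, ⟨Nat.find_spec hex, ?_⟩⟩
    show ¬ (a / 2 ^ (Nat.find hex) < ‖F x‖)
    rcases Nat.eq_zero_or_pos (Nat.find hex) with h0 | hpos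
    · rw [h0]; simpa using hxa
    · obtain ⟨m, hm⟩ := Nat.exists_eq_succ_of_ne_zero hpos.ne'
      have h := Nat.find_min hex (m := m) (by omega)
      rw [hm]
      exact h
  have hann : ∀ n : ℕ, ∫⁻ x in E n, (‖F x‖₊ : ℝ≥0∞) ^ q ∂μ ≤
      ((2:ℝ≥0∞) ^ r * ENNReal.ofReal a ^ q * D) * ((2:ℝ≥0∞) ^ (r - q)) ^ n := by
    intro n
    have hb : ∀ x ∈ E n, (‖F x‖₊ : ℝ≥0∞) ^ q ≤ (ENNReal.ofReal (a / 2 ^ n)) ^ q := by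
      intro x hx
      apply ENNReal.rpow_le_rpow _ hq.le
      rw [← enorm_eq_nnnorm, ← ofReal_norm]
      exact ENNReal.ofReal_le_ofReal (not_lt.mp hx.2)
    calc ∫⁻ x in E n, (‖F x‖₊ : ℝ≥0∞) ^ q ∂μ
        ≤ ∫⁻ _ in E n, (ENNReal.ofReal (a / 2 ^ n)) ^ q ∂μ :=
          setLIntegral_mono measurable_const hb
      _ = (ENNReal.ofReal (a / 2 ^ n)) ^ q * μ (E n) := setLIntegral_const _ _
      _ ≤ (ENNReal.ofReal (a / 2 ^ n)) ^ q * (D * (2:ℝ≥0∞) ^ (r*((n:ℝ)+1))) :=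
          mul_le_mul_right (hmeas n) _
      _ = ((2:ℝ≥0∞) ^ r * ENNReal.ofReal a ^ q * D) * ((2:ℝ≥0∞) ^ (r - q)) ^ n := by
          rw [ENNReal.ofReal_div_of_pos (by positivity), ENNReal.ofReal_pow (by norm_num),
            ENNReal.ofReal_ofNat, div_eq_mul_inv,
            ENNReal.mul_rpow_of_nonneg _ _ hq.le, ENNReal.inv_rpow,
            ← ENNReal.rpow_natCast (2:ℝ≥0∞) n, ← ENNReal.rpow_mul]
          calc ENNReal.ofReal a ^ q * ((2:ℝ≥0∞) ^ ((n:ℝ)*q))⁻¹ *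
              (D * (2:ℝ≥0∞) ^ (r*((n:ℝ)+1)))
              = ((2:ℝ≥0∞) ^ (r*((n:ℝ)+1)) * ((2:ℝ≥0∞) ^ ((n:ℝ)*q))⁻¹) *
                (ENNReal.ofReal a ^ q * D) := by ring
            _ = _ := by rw [two_rpow_arith2 r q n]; ring
  have hzero : ∫⁻ x in {x | ‖F x‖ ≤ 0}, (‖F x‖₊ : ℝ≥0∞) ^ q ∂μ = 0 := by
    have hb : ∀ x ∈ {x : X | ‖F x‖ ≤ 0}, (‖F x‖₊ : ℝ≥0∞) ^ q ≤ 0 := by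
      intro x hx
      have h0 : ‖F x‖ = 0 := le_antisymm hx (norm_nonneg _)
      rw [← enorm_eq_nnnorm, ← ofReal_norm, h0]
      simp [ENNReal.zero_rpow_of_pos hq]
    refine le_antisymm ?_ zero_le
    calc ∫⁻ x in {x | ‖F x‖ ≤ 0}, (‖F x‖₊ : ℝ≥0∞) ^ q ∂μ
        ≤ ∫⁻ _ in {x : X | ‖F x‖ ≤ 0}, 0 ∂μ := setLIntegral_mono measurable_const hb
      _ = 0 := by simp
  have hsplit : {x : X | ‖F x‖ ≤ a} ⊆ {x | 0 < ‖F x‖ ∧ ‖F x‖ ≤ a} ∪ {x | ‖F x‖ ≤ 0} := by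
    intro x hx
    rcases lt_or_ge 0 ‖F x‖ with h | h
    · exact Or.inl ⟨h, hx⟩
    · exact Or.inr h
  calc ∫⁻ x in {x | ‖F x‖ ≤ a}, (‖F x‖₊ : ℝ≥0∞) ^ q ∂μ
      ≤ ∫⁻ x in {x | 0 < ‖F x‖ ∧ ‖F x‖ ≤ a} ∪ {x | ‖F x‖ ≤ 0}, (‖F x‖₊ : ℝ≥0∞) ^ q ∂μ :=
        lintegral_mono_set hsplit
    _ ≤ (∫⁻ x in {x | 0 < ‖F x‖ ∧ ‖F x‖ ≤ a}, (‖F x‖₊ : ℝ≥0∞) ^ q ∂μ) +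
        ∫⁻ x in {x | ‖F x‖ ≤ 0}, (‖F x‖₊ : ℝ≥0∞) ^ q ∂μ := lintegral_union_le _ _ _
    _ = ∫⁻ x in {x | 0 < ‖F x‖ ∧ ‖F x‖ ≤ a}, (‖F x‖₊ : ℝ≥0∞) ^ q ∂μ := by rw [hzero, add_zero]
    _ ≤ ((2:ℝ≥0∞) ^ r * ENNReal.ofReal a ^ q * D) * (1 - (2:ℝ≥0∞) ^ (r - q))⁻¹ := by
        calc ∫⁻ x in {x | 0 < ‖F x‖ ∧ ‖F x‖ ≤ a}, (‖F x‖₊ : ℝ≥0∞) ^ q ∂μ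
            ≤ ∫⁻ x in ⋃ n, E n, (‖F x‖₊ : ℝ≥0∞) ^ q ∂μ := lintegral_mono_set hcover
          _ ≤ ∑' n, ∫⁻ x in E n, (‖F x‖₊ : ℝ≥0∞) ^ q ∂μ := lintegral_iUnion_le _ _
          _ ≤ ∑' n, ((2:ℝ≥0∞) ^ r * ENNReal.ofReal a ^ q * D) *
              ((2:ℝ≥0∞) ^ (r - q)) ^ n := ENNReal.tsum_le_tsum hann
          _ = _ := by rw [ENNReal.tsum_mul_left, ENNReal.tsum_geometric]
    _ = _ := by ring

lemma mio_grow {Φ : ℝ → ℝ} {r a : ℝ} (ha : 0 < a)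
    (hm : MonotoneOn (fun t : ℝ => t ^ (-r) * Φ t) (Ioi 0)) (n : ℕ) :
    (2:ℝ) ^ (r * (n:ℝ)) * Φ a ≤ Φ (2 ^ n * a) := by
  have h2n : (0:ℝ) < 2 ^ n := by positivity
  have h1 : (1:ℝ) ≤ 2 ^ n := one_le_pow₀ one_le_two
  have hle : a ≤ 2 ^ n * a := le_mul_of_one_le_left ha.le h1
  have key := hm (mem_Ioi.2 ha) (mem_Ioi.2 (by positivity : (0:ℝ) < 2 ^ n * a)) hle
  simp only at key
  rw [Real.mul_rpow h2n.le ha.le] at key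
  have hApos : (0:ℝ) < a ^ (-r) := Real.rpow_pos_of_pos ha _
  have hBpos : (0:ℝ) < ((2:ℝ) ^ n) ^ (-r) := Real.rpow_pos_of_pos h2n _
  have key2 : Φ a ≤ ((2:ℝ) ^ n) ^ (-r) * Φ (2 ^ n * a) := by
    have key' : a ^ (-r) * Φ a ≤ a ^ (-r) * (((2:ℝ) ^ n) ^ (-r) * Φ (2 ^ n * a)) := by
      calc a ^ (-r) * Φ a ≤ ((2:ℝ) ^ n) ^ (-r) * a ^ (-r) * Φ (2 ^ n * a) := key
        _ = a ^ (-r) * (((2:ℝ) ^ n) ^ (-r) * Φ (2 ^ n * a)) := by ring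
    exact le_of_mul_le_mul_left key' hApos
  have hid : ((2:ℝ) ^ n) ^ (-r) = (2:ℝ) ^ (-(r * (n:ℝ))) := by
    rw [← Real.rpow_natCast 2 n, ← Real.rpow_mul (by norm_num)]
    ring_nf
  have hinv : (2:ℝ) ^ (r * (n:ℝ)) * ((2:ℝ) ^ n) ^ (-r) = 1 := by
    rw [hid, Real.rpow_neg (by norm_num)]
    exact mul_inv_cancel₀ (by positivity)
  calc (2:ℝ) ^ (r * (n:ℝ)) * Φ a
      ≤ (2:ℝ) ^ (r * (n:ℝ)) * (((2:ℝ) ^ n) ^ (-r) * Φ (2 ^ n * a)) := by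
        apply mul_le_mul_of_nonneg_left key2 (by positivity)
    _ = ((2:ℝ) ^ (r * (n:ℝ)) * ((2:ℝ) ^ n) ^ (-r)) * Φ (2 ^ n * a) := by ring
    _ = Φ (2 ^ n * a) := by rw [hinv, one_mul]

lemma mio_decay {Φ : ℝ → ℝ} {r a c : ℝ} (ha : 0 < a) (hc : 1 ≤ c)
    (hm : AntitoneOn (fun t : ℝ => t ^ (-r) * Φ t) (Ioi 0)) :
    c ^ (-r) * Φ a ≤ Φ (a / c) := by
  have hc0 : (0:ℝ) < c := lt_of_lt_of_le one_pos hc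
  have hac : (0:ℝ) < a / c := by positivity
  have hle : a / c ≤ a := by
    rw [div_le_iff₀ hc0]
    nlinarith
  have key := hm (mem_Ioi.2 hac) (mem_Ioi.2 ha) hle
  simp only at key
  rw [Real.div_rpow ha.le hc0.le] at key
  -- key : a ^ (-r) * Φ a ≤ a ^ (-r) / c ^ (-r) * Φ (a / c)
  have hApos : (0:ℝ) < a ^ (-r) := Real.rpow_pos_of_pos ha _
  have hBpos : (0:ℝ) < c ^ (-r) := Real.rpow_pos_of_pos hc0 _
  have key2 : Φ a ≤ (c ^ (-r))⁻¹ * Φ (a / c) := by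
    have key' : a ^ (-r) * Φ a ≤ a ^ (-r) * ((c ^ (-r))⁻¹ * Φ (a / c)) := by
      calc a ^ (-r) * Φ a ≤ a ^ (-r) / c ^ (-r) * Φ (a / c) := key
        _ = a ^ (-r) * ((c ^ (-r))⁻¹ * Φ (a / c)) := by ring
    exact le_of_mul_le_mul_left key' hApos
  calc c ^ (-r) * Φ a ≤ c ^ (-r) * ((c ^ (-r))⁻¹ * Φ (a / c)) := by
        apply mul_le_mul_of_nonneg_left key2 (by positivity)
    _ = (c ^ (-r) * (c ^ (-r))⁻¹) * Φ (a / c) := by ring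
    _ = Φ (a / c) := by rw [mul_inv_cancel₀ hBpos.ne', one_mul]

set_option maxHeartbeats 2000000 in
/-- Marcinkiewicz-type interpolation for weak Orlicz spaces: a quasilinear operator which is
simultaneously of weak type `(p₀,p₀)` and `(p₁,p₁)` maps the weak `Φ`-moment boundedly,
whenever `p₀ < a_Φ ≤ b_Φ < p₁` (expressed via exponents `r₀ ≤ r₁`). The constant depends only
on `K, A₀, A₁, p₀, p₁, r₀, r₁`. -/
theorem marcinkiewicz_interpolation_weak_orlicz
    {X Y : Type*} [MeasurableSpace X] [MeasurableSpace Y]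
    (μ : Measure X) (ν : Measure Y) [SigmaFinite μ] [SigmaFinite ν]
    (p₀ p₁ : ℝ≥0∞) (hp₀ : 0 < p₀) (hp₀p₁ : p₀ < p₁)
    (T : (X → ℂ) → Y → ℂ) (K : ℝ) (hK : 1 ≤ K) (A₀ A₁ : ℝ) (hA₀ : 0 < A₀) (hA₁ : 0 < A₁)
    (hhom : ∀ (α : ℂ) (f : X → ℂ), (∃ g h, f = g + h ∧ MemLp g p₀ μ ∧ MemLp h p₁ μ) →
      ∀ᵐ y ∂ν, ‖T (fun x => α * f x) y‖ ≤ ‖α‖ * ‖T f y‖)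
    (hquasi : ∀ f g : X → ℂ,
      (∃ g' h', f = g' + h' ∧ MemLp g' p₀ μ ∧ MemLp h' p₁ μ) →
      (∃ g' h', g = g' + h' ∧ MemLp g' p₀ μ ∧ MemLp h' p₁ μ) →
      ∀ᵐ y ∂ν, ‖T (f + g) y‖ ≤ K * (‖T f y‖ + ‖T g y‖))
    (hw₀ : HasWeakTypePP μ ν T p₀ A₀) (hw₁ : HasWeakTypePP μ ν T p₁ A₁)
    (r₀ r₁ : ℝ) (hr₀ : p₀ < ENNReal.ofReal r₀) (hr₀r₁ : r₀ ≤ r₁)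
    (hr₁ : ENNReal.ofReal r₁ < p₁) :
    ∃ C > 0, ∀ Φ : ℝ → ℝ, IsOrliczFunction Φ →
      MonotoneOn (fun t : ℝ => t ^ (-r₀) * Φ t) (Ioi 0) →
      AntitoneOn (fun t : ℝ => t ^ (-r₁) * Φ t) (Ioi 0) →
      ∀ f : X → ℂ, (∃ g h, f = g + h ∧ MemLp g p₀ μ ∧ MemLp h p₁ μ) →
        (⨆ s ∈ Ioi (0 : ℝ), ν {y | s < ‖T f y‖} * ENNReal.ofReal (Φ s)) ≤
          ENNReal.ofReal C *
            ⨆ s ∈ Ioi (0 : ℝ), μ {x | s < ‖f x‖} * ENNReal.ofReal (Φ s) := by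
  -- exponent facts
  have hp₀top : p₀ ≠ ⊤ := ne_top_of_lt hr₀
  set q₀ := p₀.toReal with hq₀def
  have hq₀ : 0 < q₀ := ENNReal.toReal_pos hp₀.ne' hp₀top
  have hr₀pos : 0 < r₀ := ENNReal.ofReal_pos.mp (hp₀.trans hr₀)
  have hq₀r₀ : q₀ < r₀ := (ENNReal.lt_ofReal_iff_toReal_lt hp₀top).mp hr₀
  have hr₁pos : 0 < r₁ := lt_of_lt_of_le hr₀pos hr₀r₁
  set q₁ := p₁.toReal with hq₁def
  have hp₁0 : p₁ ≠ 0 := (hp₀.trans hp₀p₁).ne'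
  have hKpos : (0:ℝ) < K := lt_of_lt_of_le one_pos hK
  set δ := min 1 ((3*K^2*A₁)⁻¹) with hδdef
  have hδ : 0 < δ := lt_min one_pos (by positivity)
  have hδ1 : δ ≤ 1 := min_le_left _ _
  have hδA : A₁ * δ ≤ (3*K^2)⁻¹ := by
    have h1 : δ ≤ (3*K^2*A₁)⁻¹ := min_le_right _ _
    calc A₁ * δ ≤ A₁ * (3*K^2*A₁)⁻¹ := by nlinarith
      _ = (3*K^2)⁻¹ := by field_simp
  -- ENNReal constants
  have h2ne : (2:ℝ≥0∞) ≠ 0 := two_ne_zero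
  have h2net : (2:ℝ≥0∞) ≠ ⊤ := ENNReal.ofNat_ne_top
  set w₀ : ℝ≥0∞ := (2:ℝ≥0∞) ^ (q₀ - r₀) with hw₀def
  have hw₀lt : w₀ < 1 := ENNReal.rpow_lt_one_of_one_lt_of_neg (by norm_num : (1:ℝ≥0∞) < 2) (by linarith)
  have hw₀inv : (1 - w₀)⁻¹ ≠ ⊤ := by
    rw [Ne, ENNReal.inv_eq_top, tsub_eq_zero_iff_le]
    exact not_le.2 hw₀lt
  set w₁ : ℝ≥0∞ := (2:ℝ≥0∞) ^ (r₁ - q₁) with hw₁def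
  set cg : ℝ≥0∞ := ENNReal.ofReal (3*K^2*A₀*δ) ^ q₀ *
      ((2:ℝ≥0∞) ^ q₀ * (1 - w₀)⁻¹) * ENNReal.ofReal (δ ^ (-r₁)) with hcgdef
  set ch : ℝ≥0∞ := if p₁ = ⊤ then 0 else ENNReal.ofReal (3*K^2*A₁*δ) ^ q₁ *
      ((2:ℝ≥0∞) ^ r₁ * (1 - w₁)⁻¹) * ENNReal.ofReal (δ ^ (-r₁)) with hchdef
  have hcg_ne : cg ≠ ⊤ := by
    refine ENNReal.mul_ne_top (ENNReal.mul_ne_top ?_ (ENNReal.mul_ne_top ?_ hw₀inv))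
      ENNReal.ofReal_ne_top
    · exact ENNReal.rpow_ne_top_of_nonneg hq₀.le ENNReal.ofReal_ne_top
    · exact ENNReal.rpow_ne_top_of_nonneg hq₀.le h2net
  have hch_ne : ch ≠ ⊤ := by
    rw [hchdef]
    split_ifs with hp₁top
    · exact ENNReal.zero_ne_top
    · have hq₁pos : 0 < q₁ := ENNReal.toReal_pos hp₁0 hp₁top
      have hr₁q₁ : r₁ < q₁ := (ENNReal.ofReal_lt_iff_lt_toReal hr₁pos.le hp₁top).mp hr₁
      have hw₁lt : w₁ < 1 := ENNReal.rpow_lt_one_of_one_lt_of_neg (by norm_num : (1:ℝ≥0∞) < 2) (by linarith)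
      have hw₁inv : (1 - w₁)⁻¹ ≠ ⊤ := by
        rw [Ne, ENNReal.inv_eq_top, tsub_eq_zero_iff_le]
        exact not_le.2 hw₁lt
      exact ENNReal.mul_ne_top (ENNReal.mul_ne_top
        (ENNReal.rpow_ne_top_of_nonneg hq₁pos.le ENNReal.ofReal_ne_top)
        (ENNReal.mul_ne_top (ENNReal.rpow_ne_top_of_nonneg hr₁pos.le h2net) hw₁inv))
        ENNReal.ofReal_ne_top
  set ctot := cg + ch with hctotdef
  have hctot_ne : ctot ≠ ⊤ := by
    rw [hctotdef]
    exact ENNReal.add_ne_top.2 ⟨hcg_ne, hch_ne⟩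
  have hCpos : (0:ℝ) < ctot.toReal + 1 := by
    have := ENNReal.toReal_nonneg (a := ctot); linarith
  refine ⟨ctot.toReal + 1, hCpos, ?_⟩
  have hctotC : ctot ≤ ENNReal.ofReal (ctot.toReal + 1) := by
    calc ctot = ENNReal.ofReal ctot.toReal := (ENNReal.ofReal_toReal hctot_ne).symm
      _ ≤ _ := ENNReal.ofReal_le_ofReal (by linarith)
  intro Φ hΦ hmonoΦ hantiΦ f hf
  obtain ⟨g₀, h₀, hfsum, hg₀, hh₀⟩ := hf
  obtain ⟨hΦcont, hΦconv, hΦmono, hΦ0, hΦpos, hΦtend⟩ := hΦ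
  set M := ⨆ s ∈ Ioi (0:ℝ), μ {x | s < ‖f x‖} * ENNReal.ofReal (Φ s) with hMdef
  by_cases hMtop : M = ⊤
  · rw [hMtop, ENNReal.mul_top (ENNReal.ofReal_pos.2 hCpos).ne']
    exact le_top
  have hMle : ∀ t > 0, μ {x | t < ‖f x‖} * ENNReal.ofReal (Φ t) ≤ M := by
    intro t ht
    exact le_iSup₂ (f := fun s (_ : s ∈ Ioi (0:ℝ)) =>
      μ {x | s < ‖f x‖} * ENNReal.ofReal (Φ s)) t (mem_Ioi.2 ht)
  have hfae : AEStronglyMeasurable f μ := by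
    rw [hfsum]; exact hg₀.1.add hh₀.1
  set f' := hfae.mk f with hf'def
  have hff' : f =ᵐ[μ] f' := hfae.ae_eq_mk
  have hf'meas : Measurable f' := hfae.stronglyMeasurable_mk.measurable
  have hdisteq : ∀ t : ℝ, μ {x | t < ‖f' x‖} = μ {x | t < ‖f x‖} := by
    intro t
    apply measure_congr
    filter_upwards [hff'] with x hx
    show (t < ‖f' x‖) = (t < ‖f x‖)
    rw [hx]
  have hM' : ∀ t > 0, μ {x | t < ‖f' x‖} * ENNReal.ofReal (Φ t) ≤ M := by
    intro t ht; rw [hdisteq]; exact hMle t ht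
  -- the error term e
  set e : X → ℂ := f - f' with hedef
  have he0 : e =ᵐ[μ] 0 := by
    filter_upwards [hff'] with x hx
    simp [hedef, hx]
  have heae : AEStronglyMeasurable e μ :=
    hfae.sub hfae.stronglyMeasurable_mk.aestronglyMeasurable
  have heLp0 : eLpNorm e p₀ μ = 0 := by rw [eLpNorm_congr_ae he0, eLpNorm_zero]
  have hemem₀ : MemLp e p₀ μ := ⟨heae, by rw [heLp0]; exact ENNReal.zero_lt_top⟩
  have hTe : ∀ v > 0, ν {y | v < ‖T e y‖} = 0 := by
    intro v hv
    have h1 := (hw₀ e hemem₀).2 hp₀top v hv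
    rw [heLp0, mul_zero] at h1
    have h2 : ENNReal.ofReal v * ν {y | v < ‖T e y‖} ^ (1 / p₀.toReal) = 0 :=
      le_antisymm h1 zero_le
    rcases mul_eq_zero.mp h2 with h3 | h3
    · exact absurd h3 (ENNReal.ofReal_pos.2 hv).ne'
    · rcases ENNReal.rpow_eq_zero_iff.mp h3 with ⟨h4, _⟩ | ⟨_, h5⟩
      · exact h4
      · exact absurd h5 (not_lt.2 (by positivity))
  refine iSup₂_le fun s hs => ?_
  rw [mem_Ioi] at hs
  set a := δ * s with hadef
  have ha : 0 < a := mul_pos hδ hs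
  have hΦa : 0 < Φ a := hΦpos a ha
  set u := s / (3*K^2) with hudef
  have hu : 0 < u := by positivity
  -- split f' at height a
  set g : X → ℂ := fun x => if a < ‖f' x‖ then f' x else 0 with hgdef
  set h : X → ℂ := fun x => if a < ‖f' x‖ then 0 else f' x with hhdef
  have hgh : g + h = f' := by
    funext x
    show (if a < ‖f' x‖ then f' x else 0) + (if a < ‖f' x‖ then 0 else f' x) = f' x
    split_ifs with hx
    · exact add_zero _
    · exact zero_add _
  have hS : MeasurableSet {x | a < ‖f' x‖} := measurableSet_lt measurable_const hf'meas.norm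
  have hgmeas : Measurable g := Measurable.ite hS hf'meas measurable_const
  have hhmeas : Measurable h := Measurable.ite hS measurable_const hf'meas
  -- Φ growth facts
  have hgrow : ∀ n : ℕ, (2:ℝ) ^ (r₀ * (n:ℝ)) * Φ a ≤ Φ (2 ^ n * a) :=
    fun n => mio_grow ha hmonoΦ n
  have hdecay : ∀ n : ℕ, (2:ℝ) ^ (-(r₁ * ((n:ℝ)+1))) * Φ a ≤ Φ (a / 2 ^ (n+1)) := by
    intro n
    have h1 : (1:ℝ) ≤ 2 ^ (n+1) := one_le_pow₀ one_le_two
    have h2 := mio_decay ha h1 hantiΦ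
    have h3 : ((2:ℝ) ^ (n+1)) ^ (-r₁) = (2:ℝ) ^ (-(r₁ * ((n:ℝ)+1))) := by
      rw [← Real.rpow_natCast 2 (n+1), ← Real.rpow_mul (by norm_num)]
      congr 1
      push_cast
      ring
    rwa [h3] at h2
  have hΦsa : Φ s ≤ δ ^ (-r₁) * Φ a := by
    have hδinv : (1:ℝ) ≤ δ⁻¹ := (one_le_inv₀ hδ).2 hδ1
    have h2 := mio_decay hs hδinv hantiΦ
    have h3 : s / δ⁻¹ = a := by rw [hadef]; field_simp
    have h4 : (δ⁻¹) ^ (-r₁) = (δ ^ (-r₁))⁻¹ := Real.inv_rpow hδ.le (-r₁)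
    rw [h3, h4] at h2
    have hdpos : (0:ℝ) < δ ^ (-r₁) := Real.rpow_pos_of_pos hδ _
    calc Φ s = δ ^ (-r₁) * ((δ ^ (-r₁))⁻¹ * Φ s) := by
          rw [← mul_assoc, mul_inv_cancel₀ hdpos.ne', one_mul]
      _ ≤ δ ^ (-r₁) * Φ a := mul_le_mul_of_nonneg_left h2 hdpos.le
  set D := M / ENNReal.ofReal (Φ a) with hDdef
  have hEne0 : ENNReal.ofReal (Φ a) ≠ 0 := (ENNReal.ofReal_pos.2 hΦa).ne'
  have hDne : D ≠ ⊤ := (ENNReal.div_lt_top hMtop hEne0).ne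
  have hDE : D * ENNReal.ofReal (Φ a) = M := by
    rw [hDdef]; exact ENNReal.div_mul_cancel hEne0 ENNReal.ofReal_ne_top
  -- g-part : MemLp and distribution bound
  have htail := tail_int hf'meas hq₀ ha hΦa hgrow hM'
  have hgint : (∫⁻ x, ((‖g x‖₊ : ℝ≥0∞)) ^ q₀ ∂μ) =
      ∫⁻ x in {x | a < ‖f' x‖}, ((‖f' x‖₊ : ℝ≥0∞)) ^ q₀ ∂μ := by
    rw [← lintegral_indicator hS]
    apply lintegral_congr
    intro x
    have hgx : g x = if a < ‖f' x‖ then f' x else 0 := rfl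
    by_cases hx : a < ‖f' x‖
    · rw [Set.indicator_of_mem (show x ∈ {x | a < ‖f' x‖} from hx), hgx, if_pos hx]
    · rw [Set.indicator_of_notMem (show x ∉ {x | a < ‖f' x‖} from hx), hgx, if_neg hx,
        nnnorm_zero, ENNReal.coe_zero, ENNReal.zero_rpow_of_pos hq₀]
  have hIg : (∫⁻ x, ((‖g x‖₊ : ℝ≥0∞)) ^ q₀ ∂μ) ≤
      (2:ℝ≥0∞) ^ q₀ * (1 - w₀)⁻¹ * (ENNReal.ofReal a ^ q₀ * D) := by
    rw [hgint]; exact htail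
  have hIgne : (∫⁻ x, ((‖g x‖₊ : ℝ≥0∞)) ^ q₀ ∂μ) ≠ ⊤ := by
    refine (lt_of_le_of_lt hIg (lt_top_iff_ne_top.2 ?_)).ne
    exact ENNReal.mul_ne_top
      (ENNReal.mul_ne_top (ENNReal.rpow_ne_top_of_nonneg hq₀.le h2net) hw₀inv)
      (ENNReal.mul_ne_top (ENNReal.rpow_ne_top_of_nonneg hq₀.le ENNReal.ofReal_ne_top) hDne)
  have hgsnorm : eLpNorm g p₀ μ = (∫⁻ x, ((‖g x‖₊ : ℝ≥0∞)) ^ q₀ ∂μ) ^ (1/q₀) :=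
    eLpNorm_eq_lintegral_rpow_enorm_toReal hp₀.ne' hp₀top
  have hgmem : MemLp g p₀ μ := by
    refine ⟨hgmeas.aestronglyMeasurable, ?_⟩
    rw [hgsnorm]
    exact ENNReal.rpow_lt_top_of_nonneg (by positivity) hIgne
  have hwg := (hw₀ g hgmem).2 hp₀top u hu
  have hνg : ν {y | u < ‖T g y‖} ≤
      (ENNReal.ofReal A₀ * eLpNorm g p₀ μ / ENNReal.ofReal u) ^ q₀ :=
    weak_bound' hu hq₀ hwg
  have hgconst : ENNReal.ofReal (A₀/u) ^ q₀ * ENNReal.ofReal a ^ q₀ =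
      ENNReal.ofReal (3*K^2*A₀*δ) ^ q₀ := by
    rw [← ENNReal.mul_rpow_of_nonneg _ _ hq₀.le, ← ENNReal.ofReal_mul (by positivity)]
    congr 2
    rw [hudef, hadef]
    field_simp
  have hgfinal : ν {y | u < ‖T g y‖} * ENNReal.ofReal (Φ s) ≤ cg * M := by
    have he1 : ENNReal.ofReal A₀ * eLpNorm g p₀ μ / ENNReal.ofReal u =
        ENNReal.ofReal (A₀/u) * eLpNorm g p₀ μ := by
      rw [ENNReal.ofReal_div_of_pos hu, div_eq_mul_inv, div_eq_mul_inv]; ring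
    have hνg2 : ν {y | u < ‖T g y‖} ≤ ENNReal.ofReal (A₀/u) ^ q₀ *
        ((2:ℝ≥0∞) ^ q₀ * (1 - w₀)⁻¹ * (ENNReal.ofReal a ^ q₀ * D)) := by
      refine hνg.trans ?_
      rw [he1, ENNReal.mul_rpow_of_nonneg _ _ hq₀.le, hgsnorm, rpow_one_div_rpow _ hq₀]
      exact mul_le_mul_right hIg _
    calc ν {y | u < ‖T g y‖} * ENNReal.ofReal (Φ s)
        ≤ (ENNReal.ofReal (A₀/u) ^ q₀ *
            ((2:ℝ≥0∞) ^ q₀ * (1 - w₀)⁻¹ * (ENNReal.ofReal a ^ q₀ * D))) *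
          (ENNReal.ofReal (δ ^ (-r₁)) * ENNReal.ofReal (Φ a)) := by
          refine mul_le_mul' hνg2 ?_
          rw [← ENNReal.ofReal_mul (by positivity)]
          exact ENNReal.ofReal_le_ofReal hΦsa
      _ = (ENNReal.ofReal (A₀/u) ^ q₀ * ENNReal.ofReal a ^ q₀) *
            ((2:ℝ≥0∞) ^ q₀ * (1 - w₀)⁻¹) * ENNReal.ofReal (δ ^ (-r₁)) *
            (D * ENNReal.ofReal (Φ a)) := by ring
      _ = cg * M := by rw [hgconst, hDE, hcgdef]
  -- h-part
  obtain ⟨hhmem, hhfinal⟩ : MemLp h p₁ μ ∧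
      ν {y | u < ‖T h y‖} * ENNReal.ofReal (Φ s) ≤ ch * M := by
    rcases eq_or_ne p₁ ⊤ with hp₁top | hp₁top
    · have hbd : ∀ᵐ x ∂μ, ‖h x‖ ≤ a := by
        refine Eventually.of_forall fun x => ?_
        have hhx : h x = if a < ‖f' x‖ then 0 else f' x := rfl
        rw [hhx]
        by_cases hx : a < ‖f' x‖
        · rw [if_pos hx, norm_zero]; exact ha.le
        · rw [if_neg hx]; exact le_of_not_gt hx
      have hhmem : MemLp h p₁ μ := by
        rw [hp₁top]
        exact memLp_top_of_bound hhmeas.aestronglyMeasurable a hbd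
      have hsup := (hw₁ h hhmem).1 hp₁top
      have h2 : eLpNorm h ⊤ μ ≤ ENNReal.ofReal a := by
        rw [eLpNorm_exponent_top]
        exact eLpNormEssSup_le_of_ae_bound hbd
      have h3 : eLpNormEssSup (T h) ν ≤ ENNReal.ofReal u := by
        refine hsup.trans ?_
        calc ENNReal.ofReal A₁ * eLpNorm h ⊤ μ ≤ ENNReal.ofReal A₁ * ENNReal.ofReal a :=
              mul_le_mul_right h2 _
          _ = ENNReal.ofReal (A₁ * a) := (ENNReal.ofReal_mul hA₁.le).symm
          _ ≤ ENNReal.ofReal u := by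
              apply ENNReal.ofReal_le_ofReal
              rw [hadef, hudef]
              calc A₁ * (δ * s) = (A₁ * δ) * s := by ring
                _ ≤ (3*K^2)⁻¹ * s := mul_le_mul_of_nonneg_right hδA hs.le
                _ = s / (3*K^2) := by field_simp
      have hν0 : ν {y | u < ‖T h y‖} = 0 := by
        have hae : ∀ᵐ y ∂ν, ‖T h y‖ ≤ u := by
          filter_upwards [ae_le_eLpNormEssSup (f := T h) (μ := ν)] with y hy
          by_contra hcon
          push_neg at hcon
          have h4 : ENNReal.ofReal u < (‖T h y‖₊ : ℝ≥0∞) := by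
            rw [← enorm_eq_nnnorm, ← ofReal_norm]
            exact (ENNReal.ofReal_lt_ofReal_iff (hu.trans hcon)).2 hcon
          exact absurd (hy.trans h3) (not_le.2 h4)
        have h5 := ae_iff.mp hae
        simp only [not_le] at h5
        exact h5
      refine ⟨hhmem, ?_⟩
      rw [hν0, zero_mul]
      exact zero_le
    · -- p₁ finite
      have hq₁pos : 0 < q₁ := ENNReal.toReal_pos hp₁0 hp₁top
      have hr₁q₁ : r₁ < q₁ := (ENNReal.ofReal_lt_iff_lt_toReal hr₁pos.le hp₁top).mp hr₁
      have hw₁lt : w₁ < 1 := ENNReal.rpow_lt_one_of_one_lt_of_neg (by norm_num : (1:ℝ≥0∞) < 2) (by linarith)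
      have hw₁inv : (1 - w₁)⁻¹ ≠ ⊤ := by
        rw [Ne, ENNReal.inv_eq_top, tsub_eq_zero_iff_le]
        exact not_le.2 hw₁lt
      have hhead := head_int hf'meas hq₁pos ha hΦa hdecay hM'
      have hhint : (∫⁻ x, ((‖h x‖₊ : ℝ≥0∞)) ^ q₁ ∂μ) =
          ∫⁻ x in {x | ‖f' x‖ ≤ a}, ((‖f' x‖₊ : ℝ≥0∞)) ^ q₁ ∂μ := by
        have hS' : MeasurableSet {x : X | ‖f' x‖ ≤ a} :=
          measurableSet_le hf'meas.norm measurable_const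
        rw [← lintegral_indicator hS']
        apply lintegral_congr
        intro x
        have hhx : h x = if a < ‖f' x‖ then 0 else f' x := rfl
        by_cases hx : a < ‖f' x‖
        · rw [Set.indicator_of_notMem (show x ∉ {x | ‖f' x‖ ≤ a} from not_le.2 hx), hhx,
            if_pos hx, nnnorm_zero, ENNReal.coe_zero, ENNReal.zero_rpow_of_pos hq₁pos]
        · rw [Set.indicator_of_mem (show x ∈ {x | ‖f' x‖ ≤ a} from not_lt.1 hx), hhx,
            if_neg hx]
      have hIh : (∫⁻ x, ((‖h x‖₊ : ℝ≥0∞)) ^ q₁ ∂μ) ≤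
          (2:ℝ≥0∞) ^ r₁ * (1 - w₁)⁻¹ * (ENNReal.ofReal a ^ q₁ * D) := by
        rw [hhint]; exact hhead
      have hIhne : (∫⁻ x, ((‖h x‖₊ : ℝ≥0∞)) ^ q₁ ∂μ) ≠ ⊤ := by
        refine (lt_of_le_of_lt hIh (lt_top_iff_ne_top.2 ?_)).ne
        exact ENNReal.mul_ne_top
          (ENNReal.mul_ne_top (ENNReal.rpow_ne_top_of_nonneg hr₁pos.le h2net) hw₁inv)
          (ENNReal.mul_ne_top (ENNReal.rpow_ne_top_of_nonneg hq₁pos.le ENNReal.ofReal_ne_top) hDne)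
      have hhsnorm : eLpNorm h p₁ μ = (∫⁻ x, ((‖h x‖₊ : ℝ≥0∞)) ^ q₁ ∂μ) ^ (1/q₁) :=
        eLpNorm_eq_lintegral_rpow_enorm_toReal hp₁0 hp₁top
      have hhmem : MemLp h p₁ μ := by
        refine ⟨hhmeas.aestronglyMeasurable, ?_⟩
        rw [hhsnorm]
        exact ENNReal.rpow_lt_top_of_nonneg (by positivity) hIhne
      have hwh := (hw₁ h hhmem).2 hp₁top u hu
      have hνh : ν {y | u < ‖T h y‖} ≤
          (ENNReal.ofReal A₁ * eLpNorm h p₁ μ / ENNReal.ofReal u) ^ q₁ :=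
        weak_bound' hu hq₁pos hwh
      have hhconst : ENNReal.ofReal (A₁/u) ^ q₁ * ENNReal.ofReal a ^ q₁ =
          ENNReal.ofReal (3*K^2*A₁*δ) ^ q₁ := by
        rw [← ENNReal.mul_rpow_of_nonneg _ _ hq₁pos.le, ← ENNReal.ofReal_mul (by positivity)]
        congr 2
        rw [hudef, hadef]
        field_simp
      refine ⟨hhmem, ?_⟩
      have he1 : ENNReal.ofReal A₁ * eLpNorm h p₁ μ / ENNReal.ofReal u =
          ENNReal.ofReal (A₁/u) * eLpNorm h p₁ μ := by
        rw [ENNReal.ofReal_div_of_pos hu, div_eq_mul_inv, div_eq_mul_inv]; ring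
      have hνh2 : ν {y | u < ‖T h y‖} ≤ ENNReal.ofReal (A₁/u) ^ q₁ *
          ((2:ℝ≥0∞) ^ r₁ * (1 - w₁)⁻¹ * (ENNReal.ofReal a ^ q₁ * D)) := by
        refine hνh.trans ?_
        rw [he1, ENNReal.mul_rpow_of_nonneg _ _ hq₁pos.le, hhsnorm, rpow_one_div_rpow _ hq₁pos]
        exact mul_le_mul_right hIh _
      calc ν {y | u < ‖T h y‖} * ENNReal.ofReal (Φ s)
          ≤ (ENNReal.ofReal (A₁/u) ^ q₁ *
              ((2:ℝ≥0∞) ^ r₁ * (1 - w₁)⁻¹ * (ENNReal.ofReal a ^ q₁ * D))) *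
            (ENNReal.ofReal (δ ^ (-r₁)) * ENNReal.ofReal (Φ a)) := by
            refine mul_le_mul' hνh2 ?_
            rw [← ENNReal.ofReal_mul (by positivity)]
            exact ENNReal.ofReal_le_ofReal hΦsa
        _ = (ENNReal.ofReal (A₁/u) ^ q₁ * ENNReal.ofReal a ^ q₁) *
              ((2:ℝ≥0∞) ^ r₁ * (1 - w₁)⁻¹) * ENNReal.ofReal (δ ^ (-r₁)) *
              (D * ENNReal.ofReal (Φ a)) := by ring
        _ = ch * M := by rw [hhconst, hDE, hchdef, if_neg hp₁top]
  -- quasilinearity : split the distribution of T f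
  have hq2 := hquasi g h ⟨g, 0, (add_zero g).symm, hgmem, MemLp.zero⟩
    ⟨0, h, (zero_add h).symm, MemLp.zero, hhmem⟩
  rw [hgh] at hq2
  have hfe : f' + e = f := by
    funext x
    simp only [Pi.add_apply, hedef, Pi.sub_apply]
    ring
  have hq1 := hquasi f' e ⟨g, h, hgh.symm, hgmem, hhmem⟩
    ⟨e, 0, (add_zero e).symm, hemem₀, MemLp.zero⟩
  rw [hfe] at hq1
  set v := s / (3*K) with hvdef
  have hv : 0 < v := by positivity
  have hPnull := ae_iff.mp (hq1.and hq2)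
  have hsub : {y | s < ‖T f y‖} ⊆
      {y | ¬ (‖T f y‖ ≤ K * (‖T f' y‖ + ‖T e y‖) ∧ ‖T f' y‖ ≤ K * (‖T g y‖ + ‖T h y‖))} ∪
      ({y | u < ‖T g y‖} ∪ ({y | u < ‖T h y‖} ∪ {y | v < ‖T e y‖})) := by
    intro y hy
    rw [mem_setOf_eq] at hy
    by_cases hP : ‖T f y‖ ≤ K * (‖T f' y‖ + ‖T e y‖) ∧ ‖T f' y‖ ≤ K * (‖T g y‖ + ‖T h y‖)
    · right
      by_contra hcon
      simp only [mem_union, mem_setOf_eq, not_or, not_lt] at hcon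
      obtain ⟨hg', hh', he'⟩ := hcon
      have c1 : ‖T f' y‖ ≤ K * (2*u) := by nlinarith [hP.2]
      have c2 : ‖T f y‖ ≤ K * (K * (2*u) + v) := by nlinarith [hP.1, c1]
      have c3 : K * (K * (2*u) + v) = s * (2/3) + s * (1/3) := by
        rw [hudef, hvdef]
        field_simp
      linarith
    · left; exact hP
  have hνsplit : ν {y | s < ‖T f y‖} ≤ ν {y | u < ‖T g y‖} + ν {y | u < ‖T h y‖} := by
    refine le_trans (measure_mono hsub) ?_
    refine le_trans (measure_union_le _ _) ?_
    rw [hPnull, zero_add]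
    refine le_trans (measure_union_le _ _) ?_
    refine add_le_add_right ?_ _
    refine le_trans (measure_union_le _ _) ?_
    rw [hTe v hv, add_zero]
  calc ν {y | s < ‖T f y‖} * ENNReal.ofReal (Φ s)
      ≤ (ν {y | u < ‖T g y‖} + ν {y | u < ‖T h y‖}) * ENNReal.ofReal (Φ s) :=
        mul_le_mul_left hνsplit _
    _ = ν {y | u < ‖T g y‖} * ENNReal.ofReal (Φ s) +
        ν {y | u < ‖T h y‖} * ENNReal.ofReal (Φ s) := add_mul _ _ _
    _ ≤ cg * M + ch * M := add_le_add hgfinal hhfinal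
    _ = ctot * M := (add_mul cg ch M).symm
    _ ≤ ENNReal.ofReal (ctot.toReal + 1) * M := mul_le_mul_left hctotC _
end

section
/- Renorming of weak Orlicz spaces (commutative case of Corollary 4.4): Let (X, μ) be a σ-finite measure space and Φ an Orlicz function for which there exist 1 < p ≤ q < ∞ such that t ↦ t^{−p}Φ(t) is nondecreasing on (0,∞) and t ↦ t^{−q}Φ(t) is nonincreasing on (0,∞) (this expresses 1 < a_Φ ≤ b_Φ < ∞). For a measurable f : X → ℂ with ‖f‖_{L^w_Φ} < ∞, set f**(t) = (1/t)·∫₀^t f*(s) ds for t > 0, where f* is the decreasing rearrangement of f. Then there exists a constant C > 0 depending only on Φ, p, q such that ‖f‖_{L^w_Φ} ≤ inf{c > 0 : t·Φ(f**(t)/c) ≤ 1 for all t > 0} ≤ C·‖f‖_{L^w_Φ}. In particular the functional f ↦ inf{c > 0 : t·Φ(f**(t)/c) ≤ 1 for all t > 0} is equivalent to ‖·‖_{L^w_Φ}. -/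
open Set Filter MeasureTheory
open scoped ENNReal

/-- The decreasing rearrangement `f*(t) = inf {s > 0 : λ_f(s) ≤ t}` with `inf ∅ = +∞`,
a value in `[0,∞]`. -/
noncomputable def rearrangement {X : Type*} [MeasurableSpace X] (μ : Measure X) (f : X → ℂ)
    (t : ℝ) : ℝ≥0∞ :=
  sInf (ENNReal.ofReal '' {s : ℝ | 0 < s ∧ distrib μ f s ≤ ENNReal.ofReal t})

/-- `f**(t) = (1/t) ∫₀ᵗ f*(s) ds`, a value in `[0,∞]`. -/
noncomputable def doubleStar {X : Type*} [MeasurableSpace X] (μ : Measure X) (f : X → ℂ)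
    (t : ℝ) : ℝ≥0∞ :=
  (ENNReal.ofReal t)⁻¹ * ∫⁻ s in Ioc (0 : ℝ) t, rearrangement μ f s

/-- The extension of an Orlicz function to `[0,∞]` with `Φ(∞) = ∞`. -/
noncomputable def PhiE (Φ : ℝ → ℝ) (x : ℝ≥0∞) : ℝ≥0∞ :=
  if x = ⊤ then ⊤ else ENNReal.ofReal (Φ x.toReal)

noncomputable def invPhi (Φ : ℝ → ℝ) (y : ℝ) : ℝ := sSup {s | 0 ≤ s ∧ Φ s ≤ y}

section AuxInvPhi
variable {Φ : ℝ → ℝ} {y s : ℝ}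

lemma invPhi_bddAbove (htop : Tendsto Φ atTop atTop) (y : ℝ) :
    BddAbove {s | 0 ≤ s ∧ Φ s ≤ y} := by
  obtain ⟨T, hT⟩ := eventually_atTop.1 (htop.eventually_gt_atTop y)
  exact ⟨T, fun s hs => by
    by_contra h
    exact absurd hs.2 (not_le.2 (hT s (le_of_not_ge h)))⟩

lemma invPhi_nonneg (h0 : Φ 0 = 0) (htop : Tendsto Φ atTop atTop) (hy : 0 ≤ y) :
    0 ≤ invPhi Φ y :=
  le_csSup (invPhi_bddAbove htop y) ⟨le_refl 0, by simpa [h0]⟩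

lemma phi_invPhi_le (hc : ContinuousOn Φ (Ici 0)) (h0 : Φ 0 = 0)
    (htop : Tendsto Φ atTop atTop) (hy : 0 ≤ y) : Φ (invPhi Φ y) ≤ y := by
  have hset : {s | 0 ≤ s ∧ Φ s ≤ y} = Ici 0 ∩ Φ ⁻¹' Iic y := by
    ext x; simp only [mem_setOf_eq, mem_inter_iff, mem_Ici, mem_preimage, mem_Iic]
  have hclosed : IsClosed {s | 0 ≤ s ∧ Φ s ≤ y} := by
    rw [hset]
    exact hc.preimage_isClosed_of_isClosed isClosed_Ici isClosed_Iic
  exact (hclosed.csSup_mem ⟨0, le_refl 0, by simpa [h0]⟩ (invPhi_bddAbove htop y)).2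

lemma lt_phi_of_invPhi_lt (h0 : Φ 0 = 0) (htop : Tendsto Φ atTop atTop)
    (hy : 0 ≤ y) (hs : invPhi Φ y < s) : y < Φ s := by
  by_contra h
  push_neg at h
  exact absurd (le_csSup (invPhi_bddAbove htop y)
    ⟨le_trans (invPhi_nonneg h0 htop hy) hs.le, h⟩) (not_le.2 hs)

lemma invPhi_scaling (h0 : Φ 0 = 0) (htop : Tendsto Φ atTop atTop)
    (hcont : ContinuousOn Φ (Ici 0)) {p : ℝ} (hp : 0 < p)
    (hmono : MonotoneOn (fun t : ℝ => t ^ (-p) * Φ t) (Ioi 0))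
    {u t : ℝ} (hu : 0 < u) (hut : u ≤ t) :
    invPhi Φ (1 / u) * (u / t) ^ (1 / p) ≤ invPhi Φ (1 / t) := by
  have ht : 0 < t := hu.trans_le hut
  set b := invPhi Φ (1 / u) with hb
  have hbnn : 0 ≤ b := invPhi_nonneg h0 htop (by positivity)
  set l := (u / t) ^ (1 / p) with hl
  have hl0 : 0 < l := Real.rpow_pos_of_pos (by positivity) _
  have hl1 : l ≤ 1 :=
    Real.rpow_le_one (by positivity) (by rw [div_le_one ht]; exact hut) (by positivity)
  have hlp : l ^ p = u / t := by
    rw [hl, ← Real.rpow_mul (by positivity : (0:ℝ) ≤ u / t), one_div_mul_cancel hp.ne',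
      Real.rpow_one]
  have key : Φ (b * l) ≤ l ^ p * Φ b := by
    rcases eq_or_lt_of_le hbnn with h | hb0
    · simp [← h, h0]
    · have h1 := hmono (mem_Ioi.2 (by positivity : (0:ℝ) < b * l)) (mem_Ioi.2 hb0)
        (by nlinarith : b * l ≤ b)
      simp only at h1
      rw [Real.rpow_neg (by positivity), Real.rpow_neg hbnn] at h1
      rw [inv_mul_eq_div, inv_mul_eq_div, div_le_div_iff₀ (by positivity) (by positivity)] at h1
      have hBP : (0:ℝ) < b ^ p := Real.rpow_pos_of_pos hb0 p
      have hmul : (b * l) ^ p = b ^ p * l ^ p := Real.mul_rpow hbnn hl0.le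
      rw [hmul] at h1
      have hLP : (0:ℝ) < l ^ p := Real.rpow_pos_of_pos hl0 p
      nlinarith [h1]
  have key2 : Φ (b * l) ≤ 1 / t := by
    have hPhib : Φ b ≤ 1 / u := phi_invPhi_le hcont h0 htop (by positivity)
    calc Φ (b * l) ≤ l ^ p * Φ b := key
      _ ≤ (u / t) * (1 / u) := by rw [hlp]; exact mul_le_mul_of_nonneg_left hPhib (by positivity)
      _ = 1 / t := by field_simp
  exact le_csSup (invPhi_bddAbove htop (1 / t)) ⟨by positivity, key2⟩

end AuxInvPhi

section AuxMeasure
variable {X : Type*} [MeasurableSpace X] {μ : Measure X} {f : X → ℂ} {Φ : ℝ → ℝ}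


lemma rearrangement_le (h0 : Φ 0 = 0) (htop : Tendsto Φ atTop atTop)
    {c : ℝ} (hc0 : 0 < c)
    (hadm : ∀ s > 0, distrib μ f s * ENNReal.ofReal (Φ (s / c)) ≤ 1)
    {t : ℝ} (ht : 0 < t) :
    rearrangement μ f t ≤ ENNReal.ofReal (c * invPhi Φ (1 / t)) := by
  set I := invPhi Φ (1 / t) with hI
  have hInn : 0 ≤ I := invPhi_nonneg h0 htop (by positivity)
  refine ENNReal.le_of_forall_pos_le_add fun ε hε _ => ?_
  set s' : ℝ := I + ε / c with hs'
  have hs'I : I < s' := by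
    have : (0:ℝ) < ε / c := by positivity
    simp [hs']; linarith
  have hΦs : 1 / t < Φ s' := lt_phi_of_invPhi_lt h0 htop (by positivity) hs'I
  have hΦpos : 0 < Φ s' := lt_trans (by positivity) hΦs
  have hmem : distrib μ f (c * s') ≤ ENNReal.ofReal t := by
    have h := hadm (c * s') (by positivity)
    rw [mul_div_cancel_left₀ _ hc0.ne'] at h
    have hd : distrib μ f (c * s') ≤ (ENNReal.ofReal (Φ s'))⁻¹ :=
      ENNReal.le_inv_iff_mul_le.2 h
    refine hd.trans ?_
    rw [← ENNReal.ofReal_inv_of_pos hΦpos]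
    refine ENNReal.ofReal_le_ofReal ?_
    rw [inv_le_comm₀ hΦpos ht, ← one_div]
    exact hΦs.le
  calc rearrangement μ f t ≤ ENNReal.ofReal (c * s') :=
        sInf_le ⟨c * s', ⟨by positivity, hmem⟩, rfl⟩
    _ = ENNReal.ofReal (c * I + ε) := by
        rw [hs', mul_add, mul_div_cancel₀ _ hc0.ne']
    _ ≤ ENNReal.ofReal (c * I) + ε := by
        rw [ENNReal.ofReal_add (by positivity) ε.coe_nonneg, ENNReal.ofReal_coe_nnreal]

lemma lintegral_rearr_le (h0 : Φ 0 = 0) (htop : Tendsto Φ atTop atTop)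
    (hcont : ContinuousOn Φ (Ici 0)) {p : ℝ} (hp : 1 < p)
    (hmono : MonotoneOn (fun t : ℝ => t ^ (-p) * Φ t) (Ioi 0))
    {c : ℝ} (hc0 : 0 < c)
    (hadm : ∀ s > 0, distrib μ f s * ENNReal.ofReal (Φ (s / c)) ≤ 1)
    {t : ℝ} (ht : 0 < t) :
    ∫⁻ u in Ioc (0 : ℝ) t, rearrangement μ f u ≤
      ENNReal.ofReal (c * invPhi Φ (1 / t) * (p / (p - 1)) * t) := by
  have hp0 : 0 < p := lt_trans one_pos hp
  set I := invPhi Φ (1 / t) with hIdef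
  have hInn : 0 ≤ I := invPhi_nonneg h0 htop (by positivity)
  set B : ℝ := c * I * t ^ (1 / p) with hB
  have hBnn : 0 ≤ B := by positivity
  have hr1 : (-1 : ℝ) < -(1 / p) := by
    rw [neg_lt_neg_iff]
    rw [div_lt_one hp0]; exact hp
  have step1 : ∀ u ∈ Ioc (0 : ℝ) t, rearrangement μ f u ≤
      ENNReal.ofReal (B * u ^ (-(1 / p))) := by
    intro u hu
    obtain ⟨hu0, hut⟩ := hu
    refine (rearrangement_le h0 htop hc0 hadm hu0).trans (ENNReal.ofReal_le_ofReal ?_)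
    have hsc := invPhi_scaling h0 htop hcont hp0 hmono hu0 hut
    have hl0 : (0:ℝ) < (u / t) ^ (1 / p) := Real.rpow_pos_of_pos (by positivity) _
    have h2 : invPhi Φ (1 / u) ≤ I / ((u / t) ^ (1 / p)) := (le_div_iff₀ hl0).2 hsc
    have hinv : ((u / t) ^ (1 / p))⁻¹ = t ^ (1 / p) * u ^ (-(1 / p)) := by
      rw [Real.div_rpow hu0.le ht.le, inv_div, Real.rpow_neg hu0.le, div_eq_mul_inv]
    calc c * invPhi Φ (1 / u) ≤ c * (I / ((u / t) ^ (1 / p))) :=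
          mul_le_mul_of_nonneg_left h2 hc0.le
      _ = B * u ^ (-(1 / p)) := by rw [div_eq_mul_inv, hinv, hB]; ring
  have hint : IntegrableOn (fun u : ℝ => u ^ (-(1 / p))) (Ioc 0 t) := by
    have h := intervalIntegral.intervalIntegrable_rpow' hr1 (a := 0) (b := t)
    rwa [intervalIntegrable_iff, uIoc_of_le ht.le] at h
  have hnn : 0 ≤ᵐ[volume.restrict (Ioc (0:ℝ) t)] fun u : ℝ => u ^ (-(1 / p)) := by
    filter_upwards [ae_restrict_mem measurableSet_Ioc] with u hu
    exact Real.rpow_nonneg hu.1.le _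
  have hval : ∫ u in Ioc (0:ℝ) t, u ^ (-(1 / p)) = t ^ (1 - 1 / p) / (1 - 1 / p) := by
    rw [← intervalIntegral.integral_of_le ht.le, integral_rpow (Or.inl hr1),
      Real.zero_rpow (by nlinarith : -(1 / p) + 1 > 0).ne', sub_zero,
      show -(1 / p) + 1 = 1 - 1 / p by ring]
  have hpow : t ^ (1 / p) * t ^ (1 - 1 / p) = t := by
    rw [← Real.rpow_add ht]; norm_num
  have h1p : (0:ℝ) < 1 - 1 / p := by
    rw [sub_pos, div_lt_one hp0]; exact hp
  have hre : B * (t ^ (1 - 1 / p) / (1 - 1 / p)) = c * I * (p / (p - 1)) * t := by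
    have e1 : B * (t ^ (1 - 1 / p) / (1 - 1 / p)) =
        c * I * (t ^ (1 / p) * t ^ (1 - 1 / p)) / (1 - 1 / p) := by rw [hB]; ring
    rw [e1, hpow]
    have hp1 : p - 1 ≠ 0 := by linarith
    field_simp
  calc ∫⁻ u in Ioc (0 : ℝ) t, rearrangement μ f u
      ≤ ∫⁻ u in Ioc (0:ℝ) t, ENNReal.ofReal (B * u ^ (-(1 / p))) := by
        refine setLIntegral_mono ?_ step1
        fun_prop
    _ = ENNReal.ofReal B * ∫⁻ u in Ioc (0:ℝ) t, ENNReal.ofReal (u ^ (-(1 / p))) := by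
        simp_rw [ENNReal.ofReal_mul hBnn]
        rw [lintegral_const_mul' _ _ ENNReal.ofReal_ne_top]
    _ = ENNReal.ofReal B * ENNReal.ofReal (∫ u in Ioc (0:ℝ) t, u ^ (-(1 / p))) := by
        rw [← ofReal_integral_eq_lintegral_ofReal hint hnn]
    _ = ENNReal.ofReal (c * invPhi Φ (1 / t) * (p / (p - 1)) * t) := by
        rw [hval, ← ENNReal.ofReal_mul hBnn, hre, hIdef]


lemma phiE_mono (hm : MonotoneOn Φ (Ici 0)) {x y : ℝ≥0∞} (h : x ≤ y) :
    PhiE Φ x ≤ PhiE Φ y := by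
  unfold PhiE
  rcases eq_or_ne y ⊤ with hy | hy
  · simp [hy]
  · have hx : x ≠ ⊤ := fun h' => hy (top_le_iff.1 (h' ▸ h))
    rw [if_neg hx, if_neg hy]
    exact ENNReal.ofReal_le_ofReal (hm (mem_Ici.2 ENNReal.toReal_nonneg)
      (mem_Ici.2 ENNReal.toReal_nonneg) (ENNReal.toReal_mono hy h))

lemma hard_adm (h0 : Φ 0 = 0) (htop : Tendsto Φ atTop atTop)
    (hcont : ContinuousOn Φ (Ici 0)) (hm : MonotoneOn Φ (Ici 0)) {p : ℝ} (hp : 1 < p)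
    (hmono : MonotoneOn (fun t : ℝ => t ^ (-p) * Φ t) (Ioi 0))
    {c : ℝ} (hc0 : 0 < c)
    (hadm : ∀ s > 0, distrib μ f s * ENNReal.ofReal (Φ (s / c)) ≤ 1) :
    ∀ t > 0, ENNReal.ofReal t *
      PhiE Φ (doubleStar μ f t / ENNReal.ofReal (p / (p - 1) * c)) ≤ 1 := by
  intro t ht
  set K := p / (p - 1) with hKdef
  have hK : 0 < K := div_pos (by linarith) (by linarith)
  set I := invPhi Φ (1 / t) with hIdef
  have hInn : 0 ≤ I := invPhi_nonneg h0 htop (by positivity)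
  have hds : doubleStar μ f t ≤ ENNReal.ofReal I * ENNReal.ofReal (K * c) := by
    rw [← ENNReal.ofReal_mul hInn]
    rw [doubleStar]
    calc (ENNReal.ofReal t)⁻¹ * ∫⁻ u in Ioc (0:ℝ) t, rearrangement μ f u
        ≤ (ENNReal.ofReal t)⁻¹ * ENNReal.ofReal (c * I * K * t) :=
          mul_le_mul_right (lintegral_rearr_le h0 htop hcont hp hmono hc0 hadm ht) _
      _ = ENNReal.ofReal (I * (K * c)) := by
          rw [show c * I * K * t = t * (I * (K * c)) by ring,
            ENNReal.ofReal_mul ht.le, ← mul_assoc,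
            ENNReal.inv_mul_cancel (ENNReal.ofReal_pos.2 ht).ne' ENNReal.ofReal_ne_top,
            one_mul]
  have harg : doubleStar μ f t / ENNReal.ofReal (K * c) ≤ ENNReal.ofReal I :=
    ENNReal.div_le_of_le_mul hds
  have hne : doubleStar μ f t / ENNReal.ofReal (K * c) ≠ ⊤ :=
    (lt_of_le_of_lt harg ENNReal.ofReal_lt_top).ne
  rw [PhiE, if_neg hne]
  have htr : (doubleStar μ f t / ENNReal.ofReal (K * c)).toReal ≤ I :=
    ENNReal.toReal_le_of_le_ofReal hInn harg
  have hφ : Φ ((doubleStar μ f t / ENNReal.ofReal (K * c)).toReal) ≤ 1 / t :=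
    le_trans (hm (mem_Ici.2 ENNReal.toReal_nonneg) (mem_Ici.2 hInn) htr)
      (phi_invPhi_le hcont h0 htop (by positivity))
  calc ENNReal.ofReal t * ENNReal.ofReal (Φ _) ≤
      ENNReal.ofReal t * ENNReal.ofReal (1 / t) :=
        mul_le_mul_right (ENNReal.ofReal_le_ofReal hφ) _
    _ = ENNReal.ofReal (t * (1 / t)) := (ENNReal.ofReal_mul ht.le).symm
    _ = 1 := by rw [mul_one_div_cancel ht.ne', ENNReal.ofReal_one]

lemma easy_adm (hm : MonotoneOn Φ (Ici 0)) {c : ℝ} (hc0 : 0 < c)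
    (hds : ∀ t > 0, ENNReal.ofReal t * PhiE Φ (doubleStar μ f t / ENNReal.ofReal c) ≤ 1) :
    ∀ s > 0, distrib μ f s * ENNReal.ofReal (Φ (s / c)) ≤ 1 := by
  intro s hs
  set b := ENNReal.ofReal (Φ (s / c)) with hbdef
  rcases eq_or_ne b 0 with hb | hb
  · simp [hb]
  have hb0 : 0 < b := hb.bot_lt
  have hbt : b ≠ ⊤ := ENNReal.ofReal_ne_top
  have key : ∀ t : ℝ, 0 < t → ENNReal.ofReal t < distrib μ f s →
      ENNReal.ofReal t * b ≤ 1 := by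
    intro t ht hta
    have hstar : ∀ u ∈ Ioc (0:ℝ) t, ENNReal.ofReal s ≤ rearrangement μ f u := by
      intro u hu
      refine le_sInf ?_
      rintro x ⟨s', ⟨hs'0, hs'd⟩, rfl⟩
      refine ENNReal.ofReal_le_ofReal ?_
      by_contra hcon
      push_neg at hcon
      have hanti : distrib μ f s ≤ distrib μ f s' :=
        measure_mono (fun x hx => lt_of_le_of_lt hcon.le hx)
      exact absurd ((hanti.trans hs'd).trans (ENNReal.ofReal_le_ofReal hu.2))
        (not_le.2 hta)
    have hint : ENNReal.ofReal s * ENNReal.ofReal t ≤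
        ∫⁻ u in Ioc (0:ℝ) t, rearrangement μ f u := by
      calc ENNReal.ofReal s * ENNReal.ofReal t
          = ∫⁻ _ in Ioc (0:ℝ) t, ENNReal.ofReal s := by
            rw [setLIntegral_const, Real.volume_Ioc, sub_zero]
        _ ≤ _ := setLIntegral_mono_ae' measurableSet_Ioc (ae_of_all _ hstar)
    have hds2 : ENNReal.ofReal s ≤ doubleStar μ f t := by
      rw [doubleStar]
      calc ENNReal.ofReal s
          = (ENNReal.ofReal t)⁻¹ * (ENNReal.ofReal s * ENNReal.ofReal t) := by
            rw [mul_comm (ENNReal.ofReal s), ← mul_assoc,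
              ENNReal.inv_mul_cancel (ENNReal.ofReal_pos.2 ht).ne' ENNReal.ofReal_ne_top,
              one_mul]
        _ ≤ _ := mul_le_mul_right hint _
    have harg : ENNReal.ofReal (s / c) ≤ doubleStar μ f t / ENNReal.ofReal c := by
      rw [ENNReal.ofReal_div_of_pos hc0]
      exact ENNReal.div_le_div_right hds2 _
    have hPhiE : b ≤ PhiE Φ (doubleStar μ f t / ENNReal.ofReal c) := by
      refine le_trans ?_ (phiE_mono hm harg)
      rw [PhiE, if_neg ENNReal.ofReal_ne_top, ENNReal.toReal_ofReal (by positivity)]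
    calc ENNReal.ofReal t * b ≤
        ENNReal.ofReal t * PhiE Φ (doubleStar μ f t / ENNReal.ofReal c) :=
          mul_le_mul_right hPhiE _
      _ ≤ 1 := hds t ht
  by_contra hcon
  push_neg at hcon
  have h2 : b⁻¹ < distrib μ f s := by
    calc b⁻¹ = b⁻¹ * 1 := (mul_one _).symm
      _ < b⁻¹ * (distrib μ f s * b) := by
          exact ENNReal.mul_lt_mul_right (ENNReal.inv_ne_zero.2 hbt)
            (ENNReal.inv_ne_top.2 hb0.ne') hcon
      _ = distrib μ f s := by
          rw [mul_comm (distrib μ f s), ← mul_assoc,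
            ENNReal.inv_mul_cancel hb0.ne' hbt, one_mul]
  obtain ⟨r, hr1, hr2⟩ := ENNReal.lt_iff_exists_nnreal_btwn.1 h2
  have hbinv : (0:ℝ≥0∞) < b⁻¹ := ENNReal.inv_pos.2 hbt
  have hrne : r ≠ 0 := by
    rintro rfl
    rw [ENNReal.coe_zero] at hr1
    exact absurd hr1 (not_lt.2 hbinv.le)
  have hr0 : (0:ℝ) < r := NNReal.coe_pos.2 (pos_iff_ne_zero.2 hrne)
  have hk := key r hr0 (by rwa [ENNReal.ofReal_coe_nnreal])
  have hgt : 1 < (r : ℝ≥0∞) * b := by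
    calc (1:ℝ≥0∞) = b⁻¹ * b := (ENNReal.inv_mul_cancel hb0.ne' hbt).symm
      _ < (r : ℝ≥0∞) * b := ENNReal.mul_lt_mul_left hb0.ne' hbt hr1
  rw [ENNReal.ofReal_coe_nnreal] at hk
  exact absurd hk (not_le.2 hgt)

end AuxMeasure

/-- Renorming of weak Orlicz spaces: if `1 < a_Φ ≤ b_Φ < ∞` (expressed via exponents
`1 < p ≤ q < ∞`), then the functional `f ↦ inf {c > 0 : t Φ(f**(t)/c) ≤ 1 for all t > 0}`
is equivalent to the weak Orlicz quasinorm, with a constant depending only on `Φ, p, q`. -/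
theorem weak_orlicz_renorming
    {X : Type*} [MeasurableSpace X] (μ : Measure X) [SigmaFinite μ]
    (Φ : ℝ → ℝ) (hΦ : IsOrliczFunction Φ) (p q : ℝ) (hp : 1 < p) (hpq : p ≤ q)
    (hmono : MonotoneOn (fun t : ℝ => t ^ (-p) * Φ t) (Ioi 0))
    (hanti : AntitoneOn (fun t : ℝ => t ^ (-q) * Φ t) (Ioi 0)) :
    ∃ C > 0, ∀ f : X → ℂ, Measurable f → wOrliczNorm μ Φ f < ⊤ →
      wOrliczNorm μ Φ f ≤
          sInf (ENNReal.ofReal '' {c : ℝ | 0 < c ∧ ∀ t > 0,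
            ENNReal.ofReal t * PhiE Φ (doubleStar μ f t / ENNReal.ofReal c) ≤ 1}) ∧
        sInf (ENNReal.ofReal '' {c : ℝ | 0 < c ∧ ∀ t > 0,
            ENNReal.ofReal t * PhiE Φ (doubleStar μ f t / ENNReal.ofReal c) ≤ 1}) ≤
          ENNReal.ofReal C * wOrliczNorm μ Φ f := by
  obtain ⟨hcont, hconv, hm, h0, hpos, htop⟩ := hΦ
  have hp1 : (0:ℝ) < p - 1 := by linarith
  set C := p / (p - 1) with hCdef
  have hC : 0 < C := div_pos (by linarith) hp1
  refine ⟨C, hC, fun f hfm hf => ?_⟩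
  set W := {c : ℝ | 0 < c ∧ ∀ s > 0, distrib μ f s * ENNReal.ofReal (Φ (s / c)) ≤ 1} with hW
  set DS := {c : ℝ | 0 < c ∧ ∀ t > 0,
    ENNReal.ofReal t * PhiE Φ (doubleStar μ f t / ENNReal.ofReal c) ≤ 1} with hDS
  have hsub : DS ⊆ W := fun c hc => ⟨hc.1, easy_adm hm hc.1 hc.2⟩
  constructor
  · exact sInf_le_sInf (image_mono hsub)
  · rw [wOrliczNorm] at hf ⊢
    set N := sInf (ENNReal.ofReal '' W) with hN
    refine ENNReal.le_of_forall_pos_le_add fun ε hε _ => ?_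
    set δ : ℝ := ε / C with hδ
    have hδ0 : 0 < δ := by positivity
    have hlt : N < N + ENNReal.ofReal δ :=
      ENNReal.lt_add_right hf.ne (ENNReal.ofReal_pos.2 hδ0).ne'
    obtain ⟨a, ha, halt⟩ := exists_lt_of_csInf_lt
      (by
        rcases eq_or_ne (ENNReal.ofReal '' W) ∅ with he | he
        · rw [hN, he, sInf_empty] at hf; exact absurd hf (lt_irrefl _)
        · exact nonempty_iff_ne_empty.2 he) hlt
    obtain ⟨c, hcW, rfl⟩ := ha
    have hc0 : 0 < c := hcW.1
    have hCcDS : C * c ∈ DS := ⟨by positivity,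
      hard_adm h0 htop hcont hm hp hmono hc0 hcW.2⟩
    calc sInf (ENNReal.ofReal '' DS) ≤ ENNReal.ofReal (C * c) :=
          sInf_le ⟨C * c, hCcDS, rfl⟩
      _ = ENNReal.ofReal C * ENNReal.ofReal c := ENNReal.ofReal_mul hC.le
      _ ≤ ENNReal.ofReal C * (N + ENNReal.ofReal δ) :=
          mul_le_mul_right halt.le _
      _ = ENNReal.ofReal C * N + ENNReal.ofReal C * ENNReal.ofReal δ := mul_add _ _ _
      _ = ENNReal.ofReal C * N + ε := by
          rw [← ENNReal.ofReal_mul hC.le, hδ, mul_div_cancel₀ _ hC.ne',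
            ENNReal.ofReal_coe_nnreal]
end

section
/- Embedding of the weak Orlicz space into L¹ (commutative case, used in Section 5 of the paper): Let (X, μ) be a measure space with μ(X) ≤ 1, and let Φ be an Orlicz function for which there exists p > 1 such that t ↦ t^{−p}Φ(t) is nondecreasing on (0,∞) (this expresses a_Φ > 1). Then there exists a constant C > 0 depending only on Φ and p such that ∫_X |f| dμ ≤ C·‖f‖_{L^w_Φ} for every measurable f : X → ℂ with ‖f‖_{L^w_Φ} < ∞. In particular L^w_Φ(μ) ⊆ L¹(μ). -/
open Set Filter MeasureTheory
open scoped ENNReal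

/-- Embedding of the weak Orlicz space into `L¹`: on a measure space of total mass at most `1`,
if `a_Φ > 1` (expressed by `t ↦ t^{-p} Φ(t)` nondecreasing for some `p > 1`), then there is a
constant `C > 0`, depending only on `Φ` and `p`, with `∫ |f| dμ ≤ C ‖f‖_{L^w_Φ}` for every
measurable `f` of finite weak Orlicz quasinorm. -/
theorem weak_orlicz_subset_L1
    {X : Type*} [MeasurableSpace X] (μ : Measure X) (hμ : μ univ ≤ 1)
    (Φ : ℝ → ℝ) (hΦ : IsOrliczFunction Φ) (p : ℝ) (hp : 1 < p)
    (hmono : MonotoneOn (fun t : ℝ => t ^ (-p) * Φ t) (Ioi 0)) :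
    ∃ C > 0, ∀ f : X → ℂ, Measurable f → wOrliczNorm μ Φ f < ⊤ →
      ∫⁻ x, ENNReal.ofReal ‖f x‖ ∂μ ≤ ENNReal.ofReal C * wOrliczNorm μ Φ f := by
  classical
  have hΦ1 : 0 < Φ 1 := hΦ.2.2.2.2.1 1 one_pos
  set C : ℝ := 1 + 1 / (Φ 1 * (p - 1)) with hC
  have hD : 0 < Φ 1 * (p - 1) := mul_pos hΦ1 (by linarith)
  have hCpos : 0 < C := by positivity
  refine ⟨C, hCpos, fun f hf hfin => ?_⟩
  have : IsFiniteMeasure μ := ⟨lt_of_le_of_lt hμ ENNReal.one_lt_top⟩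
  -- key estimate: for any admissible c, the integral is bounded by `C * c`.
  have key : ∀ c : ℝ, 0 < c →
      (∀ s > 0, distrib μ f s * ENNReal.ofReal (Φ (s / c)) ≤ 1) →
      ∫⁻ x, ENNReal.ofReal ‖f x‖ ∂μ ≤ ENNReal.ofReal C * ENNReal.ofReal c := by
    intro c hc hH
    have layer : ∫⁻ x, ENNReal.ofReal ‖f x‖ ∂μ
        = ∫⁻ t in Ioi 0, distrib μ f t :=
      lintegral_eq_lintegral_meas_lt μ
        (Eventually.of_forall fun x => norm_nonneg _) hf.norm.aemeasurable
    rw [layer]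
    have hsplit : (Ioi (0:ℝ)) = Ioc 0 c ∪ Ioi c := (Ioc_union_Ioi_eq_Ioi hc.le).symm
    rw [hsplit, lintegral_union measurableSet_Ioi Ioc_disjoint_Ioi_same]
    have h1 : ∫⁻ t in Ioc (0:ℝ) c, distrib μ f t ≤ ENNReal.ofReal c := by
      calc ∫⁻ t in Ioc (0:ℝ) c, distrib μ f t
          ≤ ∫⁻ _ in Ioc (0:ℝ) c, 1 := by
            refine setLIntegral_mono' measurableSet_Ioc fun t ht => ?_
            exact le_trans (measure_mono (subset_univ _)) hμ
        _ = ENNReal.ofReal c := by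
            rw [setLIntegral_const, one_mul, Real.volume_Ioc, sub_zero]
    have h2 : ∫⁻ t in Ioi c, distrib μ f t
        ≤ ENNReal.ofReal (c / (Φ 1 * (p - 1))) := by
      have hbound : ∀ t ∈ Ioi c, distrib μ f t
          ≤ ENNReal.ofReal ((c ^ p / Φ 1) * t ^ (-p)) := by
        intro t ht
        have htc : c < t := ht
        have ht0 : 0 < t := hc.trans htc
        have hone : (1:ℝ) ≤ t / c := (one_le_div hc).mpr htc.le
        have htc0 : (0:ℝ) < t / c := lt_of_lt_of_le one_pos hone
        have hΦbig : Φ 1 * (t / c) ^ p ≤ Φ (t / c) := by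
          have h := hmono (mem_Ioi.mpr one_pos) (mem_Ioi.mpr htc0) hone
          simp only [Real.one_rpow, one_mul] at h
          have hpow : (0:ℝ) < (t / c) ^ p := Real.rpow_pos_of_pos htc0 p
          rw [Real.rpow_neg htc0.le] at h
          calc Φ 1 * (t / c) ^ p ≤ ((t / c) ^ p)⁻¹ * Φ (t / c) * (t / c) ^ p :=
                mul_le_mul_of_nonneg_right h hpow.le
            _ = Φ (t / c) := by field_simp
        have hΦpos : 0 < Φ (t / c) :=
          lt_of_lt_of_le (mul_pos hΦ1 (Real.rpow_pos_of_pos htc0 p)) hΦbig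
        have hd : distrib μ f t ≤ (ENNReal.ofReal (Φ (t / c)))⁻¹ := by
          rw [ENNReal.le_inv_iff_mul_le]
          exact hH t ht0
        refine hd.trans ?_
        rw [← ENNReal.ofReal_inv_of_pos hΦpos]
        apply ENNReal.ofReal_le_ofReal
        rw [inv_le_iff_one_le_mul₀ hΦpos]
        have hval : c ^ p / Φ 1 * t ^ (-p) * (Φ 1 * (t / c) ^ p) = 1 := by
          rw [Real.div_rpow ht0.le hc.le, Real.rpow_neg ht0.le]
          have h1 : (0:ℝ) < t ^ p := Real.rpow_pos_of_pos ht0 p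
          have h2 : (0:ℝ) < c ^ p := Real.rpow_pos_of_pos hc p
          field_simp
        calc (1:ℝ) = c ^ p / Φ 1 * t ^ (-p) * (Φ 1 * (t / c) ^ p) := hval.symm
          _ ≤ c ^ p / Φ 1 * t ^ (-p) * Φ (t / c) :=
              mul_le_mul_of_nonneg_left hΦbig
                (mul_nonneg (div_nonneg (Real.rpow_nonneg hc.le p) hΦ1.le)
                  (Real.rpow_nonneg ht0.le (-p)))
      have hint : IntegrableOn (fun t : ℝ => c ^ p / Φ 1 * t ^ (-p)) (Ioi c) :=
        (integrableOn_Ioi_rpow_of_lt (by linarith : -p < -1) hc).const_mul _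
      calc ∫⁻ t in Ioi c, distrib μ f t
          ≤ ∫⁻ t in Ioi c, ENNReal.ofReal (c ^ p / Φ 1 * t ^ (-p)) :=
            setLIntegral_mono' measurableSet_Ioi hbound
        _ = ENNReal.ofReal (∫ t in Ioi c, c ^ p / Φ 1 * t ^ (-p)) := by
            rw [ofReal_integral_eq_lintegral_ofReal hint]
            filter_upwards [ae_restrict_mem measurableSet_Ioi] with t ht
            exact mul_nonneg (div_nonneg (Real.rpow_nonneg hc.le p) hΦ1.le)
              (Real.rpow_nonneg (hc.trans ht).le (-p))
        _ = ENNReal.ofReal (c / (Φ 1 * (p - 1))) := by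
            congr 1
            rw [MeasureTheory.integral_const_mul, integral_Ioi_rpow_of_lt (by linarith) hc]
            have e1 : -c ^ (-p + 1) / (-p + 1) = c ^ (-p + 1) / (p - 1) := by
              rw [show (-p + 1 : ℝ) = -(p - 1) by ring, div_neg, neg_div, neg_neg]
            rw [e1, div_mul_div_comm, ← Real.rpow_add hc,
              show p + (-p + 1) = (1:ℝ) by ring, Real.rpow_one]
    calc (∫⁻ t in Ioc (0:ℝ) c, distrib μ f t) + ∫⁻ t in Ioi c, distrib μ f t
        ≤ ENNReal.ofReal c + ENNReal.ofReal (c / (Φ 1 * (p - 1))) := add_le_add h1 h2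
      _ = ENNReal.ofReal C * ENNReal.ofReal c := by
          rw [← ENNReal.ofReal_add hc.le (div_nonneg hc.le hD.le), ← ENNReal.ofReal_mul hCpos.le]
          congr 1
          rw [hC]
          field_simp
  -- conclude by taking the infimum
  have hC0 : ENNReal.ofReal C ≠ 0 := by
    simp [ENNReal.ofReal_eq_zero, not_le, hCpos]
  have hCtop : ENNReal.ofReal C ≠ ⊤ := ENNReal.ofReal_ne_top
  have hdiv : (∫⁻ x, ENNReal.ofReal ‖f x‖ ∂μ) / ENNReal.ofReal C ≤ wOrliczNorm μ Φ f := by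
    refine le_sInf fun b hb => ?_
    obtain ⟨c, ⟨hc, hH⟩, rfl⟩ := hb
    rw [ENNReal.div_le_iff_le_mul (Or.inl hC0) (Or.inl hCtop)]
    rw [mul_comm]
    exact key c hc hH
  rw [ENNReal.div_le_iff_le_mul (Or.inl hC0) (Or.inl hCtop), mul_comm] at hdiv
  exact hdiv
end

section
/- (Example 3.6 of the paper.) Let a > 1 and b > 0 and define Φ(t) = t^a·log(1 + t^b) for t ≥ 0. Then: (i) Φ is an Orlicz function, i.e., Φ is continuous, convex on [0,∞), nondecreasing, Φ(0) = 0, Φ(t) > 0 for t > 0, and Φ(t) → ∞ as t → ∞; and (ii) writing Φ'(t) for the derivative of Φ at t > 0, the lower Orlicz index is a_Φ = inf_{t>0} t·Φ'(t)/Φ(t) = a and the upper Orlicz index is b_Φ = sup_{t>0} t·Φ'(t)/Φ(t) = a + b. -/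
open Set Filter

/-- The Orlicz function of Example 3.6: `Φ(t) = t^a · log(1 + t^b)`. -/
noncomputable def PhiExample (a b : ℝ) (t : ℝ) : ℝ :=
  t ^ a * Real.log (1 + t ^ b)

lemma phi_hasDerivAt (a b : ℝ) (ha : 1 < a) (hb : 0 < b) {t : ℝ} (ht : 0 < t) :
    HasDerivAt (PhiExample a b)
      (a * t ^ (a - 1) * Real.log (1 + t ^ b) + b * t ^ (a + b - 1) / (1 + t ^ b)) t := by
  have h1 : HasDerivAt (fun x : ℝ => x ^ a) (a * t ^ (a - 1)) t :=
    Real.hasDerivAt_rpow_const (Or.inl ht.ne')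
  have h2 : HasDerivAt (fun x : ℝ => 1 + x ^ b) (b * t ^ (b - 1)) t := by
    simpa using (Real.hasDerivAt_rpow_const (p := b) (Or.inl ht.ne')).const_add 1
  have hpos : 0 < 1 + t ^ b := by positivity
  have h3 : HasDerivAt (fun x : ℝ => Real.log (1 + x ^ b)) (b * t ^ (b - 1) / (1 + t ^ b)) t :=
    h2.log hpos.ne'
  have h4 := h1.mul h3
  have e1 : t ^ (a + b - 1) = t ^ a * t ^ (b - 1) := by
    rw [← Real.rpow_add ht]; ring_nf
  refine h4.congr_deriv ?_
  · rw [e1]; field_simp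

lemma phi_ratio (a b : ℝ) (ha : 1 < a) (hb : 0 < b) {t : ℝ} (ht : 0 < t) :
    t * deriv (PhiExample a b) t / PhiExample a b t
      = a + b * t ^ b / ((1 + t ^ b) * Real.log (1 + t ^ b)) := by
  rw [(phi_hasDerivAt a b ha hb ht).deriv]
  have hu : 0 < t ^ b := Real.rpow_pos_of_pos ht b
  have hL : 0 < Real.log (1 + t ^ b) := Real.log_pos (by linarith)
  have hA : 0 < t ^ a := Real.rpow_pos_of_pos ht a
  have e2 : t ^ (a - 1) * t = t ^ a := by
    have h : a - 1 + 1 = a := by ring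
    rw [← h, Real.rpow_add_one ht.ne' (a - 1), h]
  have e1 : t ^ (a + b - 1) * t = t ^ a * t ^ b := by
    have h : a + b - 1 + 1 = a + b := by ring
    rw [← Real.rpow_add ht, ← h, Real.rpow_add_one ht.ne', h]
  unfold PhiExample
  field_simp
  linear_combination (a * (1 + t ^ b) * Real.log (1 + t ^ b)) * e2 + b * e1

lemma psi_hasDerivAt (a b : ℝ) (ha : 1 < a) (hb : 0 < b) {t : ℝ} (ht : 0 < t) :
    HasDerivAt (fun x : ℝ => a * x ^ (a-1) * Real.log (1 + x ^ b) + b * x ^ (a+b-1) / (1 + x ^ b))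
      (a*(a-1)*t^(a-2)*Real.log (1+t^b) + a*b*t^(a+b-2)/(1+t^b)
        + b*t^(a+b-2)*((a+b-1) + (a-1)*t^b)/((1+t^b)^2)) t := by
  have hpos : 0 < 1 + t ^ b := by positivity
  have h1 : HasDerivAt (fun x : ℝ => x ^ (a-1)) ((a-1) * t ^ (a-1-1)) t :=
    Real.hasDerivAt_rpow_const (Or.inl ht.ne')
  have h2 : HasDerivAt (fun x : ℝ => 1 + x ^ b) (b * t ^ (b-1)) t := by
    simpa using (Real.hasDerivAt_rpow_const (p := b) (Or.inl ht.ne')).const_add 1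
  have h3 : HasDerivAt (fun x : ℝ => Real.log (1 + x ^ b)) (b * t ^ (b-1) / (1 + t ^ b)) t :=
    h2.log hpos.ne'
  have h4 : HasDerivAt (fun x : ℝ => x ^ (a+b-1)) ((a+b-1) * t ^ (a+b-1-1)) t :=
    Real.hasDerivAt_rpow_const (Or.inl ht.ne')
  have h5 := ((h1.const_mul a).mul h3).add ((h4.const_mul b).div h2 hpos.ne')
  refine h5.congr_deriv ?_
  have i1 : a - 1 - 1 = a - 2 := by ring
  have i2 : a + b - 1 - 1 = a + b - 2 := by ring
  rw [i1, i2]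
  have i3 : t ^ (a-1) * t ^ (b-1) = t ^ (a+b-2) := by
    rw [← Real.rpow_add ht]; ring_nf
  have i4 : t ^ (a+b-1) * t ^ (b-1) = t ^ (a+b-2) * t ^ b := by
    rw [← Real.rpow_add ht, ← Real.rpow_add ht]; ring_nf
  linear_combination (a*b/(1+t^b)) * i3 - (b^2/(1+t^b)^2) * i4

lemma phi_ratio_bounds (a b : ℝ) (ha : 1 < a) (hb : 0 < b) {t : ℝ} (ht : 0 < t) :
    a < t * deriv (PhiExample a b) t / PhiExample a b t ∧
    t * deriv (PhiExample a b) t / PhiExample a b t ≤ a + b := by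
  rw [phi_ratio a b ha hb ht]
  have hu : 0 < t ^ b := Real.rpow_pos_of_pos ht b
  have hL : 0 < Real.log (1 + t ^ b) := Real.log_pos (by linarith)
  have hLu : Real.log (1 + t ^ b) ≤ t ^ b := by
    have := Real.log_le_sub_one_of_pos (show (0:ℝ) < 1 + t ^ b by linarith)
    linarith
  have huL : t ^ b / (1 + t ^ b) ≤ Real.log (1 + t ^ b) := by
    have h := Real.one_sub_inv_le_log_of_pos (show (0:ℝ) < 1 + t ^ b by linarith)
    have h2 : 1 - (1 + t ^ b)⁻¹ = t ^ b / (1 + t ^ b) := by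
      field_simp
      ring
    linarith [h2 ▸ h]
  constructor
  · have : 0 < b * t ^ b / ((1 + t ^ b) * Real.log (1 + t ^ b)) := by positivity
    linarith
  · have h1 : b * t ^ b / ((1 + t ^ b) * Real.log (1 + t ^ b)) ≤ b := by
      rw [div_le_iff₀ (by positivity)]
      have := (div_le_iff₀ (show (0:ℝ) < 1 + t ^ b by linarith)).mp huL
      nlinarith
    linarith


/-- Example 3.6: for `a > 1` and `b > 0`, `Φ(t) = t^a log(1 + t^b)` is an Orlicz function,
with lower Orlicz index `a_Φ = inf_{t>0} t Φ'(t)/Φ(t) = a` and upper Orlicz index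
`b_Φ = sup_{t>0} t Φ'(t)/Φ(t) = a + b`. -/
theorem phiExample_is_orlicz_and_indices (a b : ℝ) (ha : 1 < a) (hb : 0 < b) :
    (ContinuousOn (PhiExample a b) (Ici 0) ∧
      ConvexOn ℝ (Ici 0) (PhiExample a b) ∧
      MonotoneOn (PhiExample a b) (Ici 0) ∧
      PhiExample a b 0 = 0 ∧
      (∀ t > 0, 0 < PhiExample a b t) ∧
      Tendsto (PhiExample a b) atTop atTop) ∧
    sInf {r : ℝ | ∃ t > 0, r = t * deriv (PhiExample a b) t / PhiExample a b t} = a ∧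
    sSup {r : ℝ | ∃ t > 0, r = t * deriv (PhiExample a b) t / PhiExample a b t} = a + b := by
  have ha0 : (0:ℝ) < a := by linarith
  -- positivity
  have key_pos : ∀ t : ℝ, 0 < t → 0 < PhiExample a b t := by
    intro t ht
    have hu : 0 < t ^ b := Real.rpow_pos_of_pos ht b
    have hA : 0 < t ^ a := Real.rpow_pos_of_pos ht a
    have hL : 0 < Real.log (1 + t ^ b) := Real.log_pos (by linarith)
    exact mul_pos hA hL
  -- continuity
  have hcont : ContinuousOn (PhiExample a b) (Ici 0) := by
    apply ContinuousOn.mul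
    · exact fun x _ => (Real.continuousAt_rpow_const x a (Or.inr ha0.le)).continuousWithinAt
    · apply ContinuousOn.log
      · exact continuousOn_const.add
          (fun x _ => (Real.continuousAt_rpow_const x b (Or.inr hb.le)).continuousWithinAt)
      · intro x hx
        have h0 : (0:ℝ) ≤ x ^ b := Real.rpow_nonneg hx b
        positivity
  have hint : interior (Ici (0:ℝ)) = Ioi 0 := interior_Ici
  have hdiff : DifferentiableOn ℝ (PhiExample a b) (interior (Ici (0:ℝ))) := by
    rw [hint]
    exact fun x hx => ((phi_hasDerivAt a b ha hb hx).differentiableAt).differentiableWithinAt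
  have hderiv_nonneg : ∀ t : ℝ, 0 < t → 0 ≤ deriv (PhiExample a b) t := by
    intro t ht
    rw [(phi_hasDerivAt a b ha hb ht).deriv]
    have hu : 0 < t ^ b := Real.rpow_pos_of_pos ht b
    have hL : 0 < Real.log (1 + t ^ b) := Real.log_pos (by linarith)
    have h1 : 0 < t ^ (a-1) := Real.rpow_pos_of_pos ht _
    have h2 : 0 < t ^ (a+b-1) := Real.rpow_pos_of_pos ht _
    have hq : 0 ≤ b * t ^ (a+b-1) / (1 + t ^ b) := by positivity
    nlinarith [mul_pos (mul_pos ha0 h1) hL]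
  have hmono : MonotoneOn (PhiExample a b) (Ici 0) :=
    monotoneOn_of_deriv_nonneg (convex_Ici 0) hcont hdiff
      (fun x hx => hderiv_nonneg x (by rwa [hint] at hx))
  -- the eventual equality of deriv with the explicit formula
  have hev : ∀ t : ℝ, 0 < t → deriv (PhiExample a b) =ᶠ[nhds t]
      (fun x => a * x ^ (a-1) * Real.log (1 + x ^ b) + b * x ^ (a+b-1) / (1 + x ^ b)) := by
    intro t ht
    filter_upwards [eventually_gt_nhds ht] with x hx
    exact (phi_hasDerivAt a b ha hb hx).deriv
  have hdiff2 : DifferentiableOn ℝ (deriv (PhiExample a b)) (interior (Ici (0:ℝ))) := by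
    rw [hint]
    intro x hx
    exact (((psi_hasDerivAt a b ha hb hx).differentiableAt).congr_of_eventuallyEq
      (hev x hx)).differentiableWithinAt
  have hconv : ConvexOn ℝ (Ici 0) (PhiExample a b) := by
    apply convexOn_of_deriv2_nonneg (convex_Ici 0) hcont hdiff hdiff2
    intro x hx
    rw [hint] at hx
    have hx' : (0:ℝ) < x := hx
    have : deriv^[2] (PhiExample a b) x = deriv (deriv (PhiExample a b)) x := rfl
    rw [this, (hev x hx').deriv_eq, (psi_hasDerivAt a b ha hb hx').deriv]
    have hu : 0 < x ^ b := Real.rpow_pos_of_pos hx' b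
    have hL : 0 < Real.log (1 + x ^ b) := Real.log_pos (by linarith)
    have h1 : 0 < x ^ (a-2) := Real.rpow_pos_of_pos hx' _
    have h2 : 0 < x ^ (a+b-2) := Real.rpow_pos_of_pos hx' _
    have t1 : 0 ≤ a*(a-1)*x^(a-2)*Real.log (1+x^b) := by
      apply mul_nonneg _ hL.le
      nlinarith [mul_pos (mul_pos ha0 (show (0:ℝ) < a-1 by linarith)) h1]
    have t2 : 0 ≤ a*b*x^(a+b-2)/(1+x^b) := by
      apply div_nonneg _ (by linarith)
      nlinarith [mul_pos (mul_pos ha0 hb) h2]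
    have t3 : 0 ≤ b*x^(a+b-2)*((a+b-1) + (a-1)*x^b)/((1+x^b)^2) := by
      apply div_nonneg _ (by positivity)
      have h5 : 0 ≤ (a+b-1) + (a-1)*x^b := by nlinarith
      exact mul_nonneg (mul_pos hb h2).le h5
    linarith
  -- Φ 0 = 0
  have hzero : PhiExample a b 0 = 0 := by
    simp [PhiExample, Real.zero_rpow ha0.ne']
  -- tendsto
  have htend : Tendsto (PhiExample a b) atTop atTop := by
    have h2 : Tendsto (fun t : ℝ => t ^ a * Real.log 2) atTop atTop :=
      (tendsto_rpow_atTop ha0).atTop_mul_const (Real.log_pos one_lt_two)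
    apply tendsto_atTop_mono' atTop _ h2
    filter_upwards [eventually_ge_atTop 1] with t ht
    have ht0 : (0:ℝ) < t := by linarith
    have hub : (1:ℝ) ≤ t ^ b := by
      have := Real.rpow_le_rpow (by norm_num) ht hb.le
      simpa [Real.one_rpow] using this
    unfold PhiExample
    apply mul_le_mul_of_nonneg_left _ (Real.rpow_nonneg ht0.le a)
    apply Real.log_le_log (by norm_num)
    linarith
  have hSne : {r : ℝ | ∃ t > 0, r = t * deriv (PhiExample a b) t / PhiExample a b t}.Nonempty :=
    ⟨_, 1, one_pos, rfl⟩
  have hlb : ∀ r ∈ {r : ℝ | ∃ t > 0, r = t * deriv (PhiExample a b) t / PhiExample a b t},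
      a ≤ r := by
    rintro r ⟨t, ht, rfl⟩
    exact (phi_ratio_bounds a b ha hb ht).1.le
  have hub : ∀ r ∈ {r : ℝ | ∃ t > 0, r = t * deriv (PhiExample a b) t / PhiExample a b t},
      r ≤ a + b := by
    rintro r ⟨t, ht, rfl⟩
    exact (phi_ratio_bounds a b ha hb ht).2
  refine ⟨⟨hcont, hconv, hmono, hzero, fun t ht => key_pos t ht, htend⟩, ?_, ?_⟩
  · -- sInf = a
    refine le_antisymm ?_ (le_csInf hSne hlb)
    by_contra hcon
    push_neg at hcon
    set S := {r : ℝ | ∃ t > 0, r = t * deriv (PhiExample a b) t / PhiExample a b t} with hS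
    set ε := sInf S - a with hε
    have hεpos : 0 < ε := by linarith
    set t := Real.exp (1/ε) with htdef
    have ht : 0 < t := Real.exp_pos _
    have hmem : t * deriv (PhiExample a b) t / PhiExample a b t ∈ S := ⟨t, ht, rfl⟩
    have htb : t ^ b = Real.exp (b/ε) := by
      rw [Real.rpow_def_of_pos ht, Real.log_exp]
      ring_nf
    have hu : 0 < t ^ b := Real.rpow_pos_of_pos ht b
    have hL : 0 < Real.log (1 + t ^ b) := Real.log_pos (by linarith)
    have heq : Real.log (t ^ b) = b/ε := by rw [htb, Real.log_exp]
    have hLlarge : b/ε < Real.log (1 + t ^ b) := by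
      have h1 : Real.log (t ^ b) < Real.log (1 + t ^ b) := Real.log_lt_log hu (by linarith)
      linarith
    have hratio : t * deriv (PhiExample a b) t / PhiExample a b t < sInf S := by
      rw [phi_ratio a b ha hb ht]
      have hb2 : b * t ^ b / ((1 + t ^ b) * Real.log (1 + t ^ b)) < ε := by
        rw [div_lt_iff₀ (by positivity)]
        have h4 : b < ε * Real.log (1 + t ^ b) := by
          have h7 := mul_lt_mul_of_pos_left hLlarge hεpos
          rw [mul_div_cancel₀ _ hεpos.ne'] at h7
          exact h7
        nlinarith
      linarith
    exact absurd (csInf_le ⟨a, hlb⟩ hmem) (not_le.mpr hratio)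
  · -- sSup = a + b
    refine le_antisymm (csSup_le hSne hub) ?_
    by_contra hcon
    push_neg at hcon
    set S := {r : ℝ | ∃ t > 0, r = t * deriv (PhiExample a b) t / PhiExample a b t} with hS
    set ε := a + b - sSup S with hε
    have hεpos : 0 < ε := by linarith
    set t := (ε/b) ^ b⁻¹ with htdef
    have hεb : 0 < ε/b := by positivity
    have ht : 0 < t := Real.rpow_pos_of_pos hεb _
    have htb : t ^ b = ε/b := Real.rpow_inv_rpow hεb.le hb.ne'
    have hmem : t * deriv (PhiExample a b) t / PhiExample a b t ∈ S := ⟨t, ht, rfl⟩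
    have hu : 0 < t ^ b := Real.rpow_pos_of_pos ht b
    have hL : 0 < Real.log (1 + t ^ b) := Real.log_pos (by linarith)
    have hLu : Real.log (1 + t ^ b) ≤ t ^ b := by
      have := Real.log_le_sub_one_of_pos (show (0:ℝ) < 1 + t ^ b by linarith)
      linarith
    have hratio : sSup S < t * deriv (PhiExample a b) t / PhiExample a b t := by
      rw [phi_ratio a b ha hb ht]
      have hstep : b / (1 + t ^ b) ≤ b * t ^ b / ((1 + t ^ b) * Real.log (1 + t ^ b)) := by
        rw [div_le_div_iff₀ (by linarith) (by positivity)]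
        nlinarith [mul_nonneg (mul_nonneg hb.le (show (0:ℝ) ≤ 1+t^b by linarith))
          (sub_nonneg.mpr hLu)]
      have hstep2 : b - ε < b / (1 + t ^ b) := by
        rw [lt_div_iff₀ (by linarith), htb]
        have hid : (b - ε) * (ε / b) = ε - ε * ε / b := by field_simp
        have hpos2 : 0 < ε * ε / b := by positivity
        nlinarith
      linarith
    exact absurd (le_csSup ⟨a + b, hub⟩ hmem) (not_le.mpr hratio)
end
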